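/- arXiv:0907.0375 — 2 statements merged into one kernel-verified Lean document; each statement's English description precedes it below -/
import Mathlib

section
/- Let (Z(t)) be the birth-and-death process with rates q(z, z+1) = μ_Z (z ∨ 1) and q(z, z−1) = ν z started from z ∈ ℕ, and let (σ_n) be its sequence of birth instants (positive jumps). Then for any γ > max(μ_Z − ν, 0), the expectation E_z(Σ_{n≥1} e^{-γ σ_n}) is finite. -/
open MeasureTheory ProbabilityTheory Real Filter Set

noncomputable section

namespace FileSharing

variable {Ω : Type*} [MeasurableSpace Ω] {S : Type*}

/-- The exponential distribution with rate `r`, as a measure on `ℝ`. -/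
def expMeasure (r : ℝ) : Measure ℝ :=
  (volume : Measure ℝ).withDensity (exponentialPDF r)

/-- The uniform distribution on `(0, 1]`. -/
def unifMeasure : Measure ℝ := (volume : Measure ℝ).restrict (Set.Ioc (0 : ℝ) 1)

/-- Embedded jump chain of a continuous-time Markov jump process:
`next s u` is the state after a jump from `s`, where `u ∈ (0,1]` selects the target. -/
def chainOf (next : S → ℝ → S) (x : S) (U : ℕ → Ω → ℝ) : ℕ → Ω → S
  | 0 => fun _ => x
  | n + 1 => fun ω => next (chainOf next x U n ω) (U n ω)

/-- Jump times: the `n`-th jump occurs after an exponential holding time with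
rate `R s` in state `s` (holding time = standard exponential `E n` divided by the rate). -/
def jumpT (R : S → ℝ) (next : S → ℝ → S) (x : S) (E U : ℕ → Ω → ℝ) : ℕ → Ω → ℝ
  | 0 => fun _ => 0
  | n + 1 => fun ω => jumpT R next x E U n ω + E n ω / R (chainOf next x U n ω)

/-- The continuous-time Markov jump process with jump rates `R`, jump transitions `next`,
initial state `x`, driven by i.i.d. standard exponentials `E` (holding times) and
i.i.d. uniform variables `U` (jump selection). -/
def jumpProc (R : S → ℝ) (next : S → ℝ → S) (x : S) (E U : ℕ → Ω → ℝ)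
    (t : ℝ) (ω : Ω) : S :=
  chainOf next x U (Nat.card {n : ℕ | jumpT R next x E U (n + 1) ω ≤ t}) ω

/-- `E` is an i.i.d. sequence of standard exponential random variables. -/
def IIDExp (P : Measure Ω) (E : ℕ → Ω → ℝ) : Prop :=
  (∀ n, Measurable (E n)) ∧ iIndepFun E P ∧
    ∀ n, Measure.map (E n) P = expMeasure 1

/-- `E`, `U` are jointly independent, the `E n` standard exponential and
the `U n` uniform on `(0,1]`. -/
def DrivingNoise (P : Measure Ω) (E U : ℕ → Ω → ℝ) : Prop :=
  (∀ n, Measurable (E n)) ∧ (∀ n, Measurable (U n)) ∧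
    iIndepFun (Sum.elim E U) P ∧
    (∀ n, Measure.map (E n) P = expMeasure 1) ∧
    (∀ n, Measure.map (U n) P = unifMeasure)

/-- A Yule (pure birth) process with rate `μ`, started from `w` individuals:
each individual gives birth to a new one at rate `μ`, so the total birth rate
in state `s` is `μ * s`. -/
def yule (μ : ℝ) (w : ℕ) (E : ℕ → Ω → ℝ) : ℝ → Ω → ℕ :=
  jumpProc (fun s => μ * s) (fun s _ => s + 1) w E (fun _ _ => 0)

/-- Total jump rate of the birth-and-death process with birth rate `μ (z ∨ 1)`
and death rate `ν z`. -/
def bdR (μ ν : ℝ) (z : ℕ) : ℝ := μ * max z 1 + ν * z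

/-- Jump transition of the birth-and-death process with birth rate `μ (z ∨ 1)`
and death rate `ν z`. -/
def bdNext (μ ν : ℝ) (z : ℕ) (u : ℝ) : ℕ :=
  if u * bdR μ ν z ≤ μ * max z 1 then z + 1 else z - 1

/-- Embedded chain of the birth-and-death process. -/
def bdChain (μ ν : ℝ) (z : ℕ) (U : ℕ → Ω → ℝ) : ℕ → Ω → ℕ :=
  chainOf (bdNext μ ν) z U

/-- Jump times of the birth-and-death process. -/
def bdTimes (μ ν : ℝ) (z : ℕ) (E U : ℕ → Ω → ℝ) : ℕ → Ω → ℝ :=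
  jumpT (bdR μ ν) (bdNext μ ν) z E U

/-- The birth-and-death process with rates `q(z, z+1) = μ (z ∨ 1)` and `q(z, z-1) = ν z`. -/
def bdProc (μ ν : ℝ) (z : ℕ) (E U : ℕ → Ω → ℝ) : ℝ → Ω → ℕ :=
  jumpProc (bdR μ ν) (bdNext μ ν) z E U

/-- `bdUp μ ν z U n ω` : the `(n+1)`-st jump of the birth-and-death process is a birth. -/
def bdUp (μ ν : ℝ) (z : ℕ) (U : ℕ → Ω → ℝ) (n : ℕ) (ω : Ω) : Prop :=
  bdChain μ ν z U (n + 1) ω = bdChain μ ν z U n ω + 1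

/-- Counting process of the birth instants of the birth-and-death process. -/
def bdBirthCount (μ ν : ℝ) (z : ℕ) (E U : ℕ → Ω → ℝ) (t : ℝ) (ω : Ω) : ℕ :=
  Nat.card {n : ℕ | bdTimes μ ν z E U (n + 1) ω ≤ t ∧ bdUp μ ν z U n ω}

/-- The `k`-th birth instant (`k` counted from `0`) of the birth-and-death process. -/
def bdBirthTime (μ ν : ℝ) (z : ℕ) (E U : ℕ → Ω → ℝ) (k : ℕ) (ω : Ω) : ℝ :=
  bdTimes μ ν z E U (Nat.nth (fun n => bdUp μ ν z U n ω) k + 1) ω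


/-! ### Auxiliary development -/

open scoped ENNReal

section Shift

variable {S : Type*}

lemma chainOf_shift (next : S → ℝ → S) (x : S) (U : ℕ → Ω → ℝ) :
    ∀ (n : ℕ) (ω : Ω), chainOf next x U (n + 1) ω
      = chainOf next (next x (U 0 ω)) (fun k => U (k + 1)) n ω
  | 0, _ => rfl
  | n + 1, ω => by
      show next (chainOf next x U (n + 1) ω) (U (n + 1) ω) = _
      rw [chainOf_shift next x U n ω]
      rfl

lemma jumpT_shift (R : S → ℝ) (next : S → ℝ → S) (x : S) (E U : ℕ → Ω → ℝ) :
    ∀ (n : ℕ) (ω : Ω), jumpT R next x E U (n + 1) ω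
      = E 0 ω / R x
        + jumpT R next (next x (U 0 ω)) (fun k => E (k + 1)) (fun k => U (k + 1)) n ω
  | 0, ω => by simp [jumpT, chainOf]
  | n + 1, ω => by
      show jumpT R next x E U (n + 1) ω + E (n + 1) ω / R (chainOf next x U (n + 1) ω) = _
      rw [jumpT_shift R next x E U n ω, chainOf_shift next x U n ω]
      show _ = _ + (jumpT R next _ _ _ n ω + _)
      ring

end Shift

section Meas

lemma measurable_bdChain {m : MeasurableSpace Ω} (μ ν : ℝ) (z : ℕ) (U : ℕ → Ω → ℝ)
    (hU : ∀ n, Measurable (U n)) : ∀ n, Measurable (fun ω => bdChain μ ν z U n ω)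
  | 0 => measurable_const
  | n + 1 => by
      have ih := measurable_bdChain μ ν z U hU n
      have h1 : Measurable (fun ω => bdR μ ν (bdChain μ ν z U n ω)) :=
        (measurable_from_nat (f := bdR μ ν)).comp ih
      have h2 : Measurable (fun ω => μ * ((max (bdChain μ ν z U n ω) 1 : ℕ) : ℝ)) :=
        (measurable_from_nat (f := fun k : ℕ => μ * ((max k 1 : ℕ) : ℝ))).comp ih
      have : (fun ω => bdChain μ ν z U (n + 1) ω)
          = fun ω => if U n ω * bdR μ ν (bdChain μ ν z U n ω)
              ≤ μ * ((max (bdChain μ ν z U n ω) 1 : ℕ) : ℝ)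
            then bdChain μ ν z U n ω + 1 else bdChain μ ν z U n ω - 1 := by
        funext ω
        simp only [bdChain, chainOf, bdNext, Nat.cast_max, Nat.cast_one]
      rw [this]
      exact Measurable.ite (measurableSet_le ((hU n).mul h1) h2)
        ((measurable_from_nat (f := fun k : ℕ => k + 1)).comp ih)
        ((measurable_from_nat (f := fun k : ℕ => k - 1)).comp ih)

lemma measurable_bdTimes {m : MeasurableSpace Ω} (μ ν : ℝ) (z : ℕ) (E U : ℕ → Ω → ℝ)
    (hE : ∀ n, Measurable (E n)) (hU : ∀ n, Measurable (U n)) :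
    ∀ n, Measurable (fun ω => bdTimes μ ν z E U n ω)
  | 0 => measurable_const
  | n + 1 => by
      have ih := measurable_bdTimes μ ν z E U hE hU n
      have h1 : Measurable (fun ω => bdR μ ν (bdChain μ ν z U n ω)) :=
        (measurable_from_nat (f := bdR μ ν)).comp (measurable_bdChain μ ν z U hU n)
      exact ih.add ((hE n).div h1)

end Meas

section Reindex

lemma iIndepFun_precomp {P : Measure Ω} [IsProbabilityMeasure P]
    {ι ι' : Type*} {f : ι → Ω → ℝ}
    (h : iIndepFun f P) (g : ι' → ι)
    (hg : Function.Injective g) :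
    iIndepFun (fun j => f (g j)) P := by
  classical
  rw [iIndepFun_iff_measure_inter_preimage_eq_mul] at h ⊢
  intro S sets hsets
  have key := h (S.image g)
    (sets := fun i => ⋂ j ∈ S.filter (fun j => g j = i), sets j) ?_
  · have hset : ∀ j ∈ S, (⋂ j' ∈ S.filter (fun j' => g j' = g j), sets j') = sets j := by
      intro j hj
      have : S.filter (fun j' => g j' = g j) = {j} := by
        ext j'
        simp only [Finset.mem_filter, Finset.mem_singleton]
        constructor
        · rintro ⟨_, h'⟩; exact hg h'
        · rintro rfl; exact ⟨hj, rfl⟩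
      rw [this]
      simp
    rw [Finset.set_biInter_finset_image, Finset.prod_image
      (fun a ha b hb hab => hg hab)] at key
    calc P (⋂ j ∈ S, (fun j => f (g j)) j ⁻¹' sets j)
        = P (⋂ j ∈ S, f (g j) ⁻¹' (⋂ j' ∈ S.filter (fun j' => g j' = g j), sets j')) := by
          congr 1
          apply Set.iInter₂_congr
          intro j hj
          rw [hset j hj]
      _ = ∏ j ∈ S, P (f (g j) ⁻¹' (⋂ j' ∈ S.filter (fun j' => g j' = g j), sets j')) := key
      _ = ∏ j ∈ S, P ((fun j => f (g j)) j ⁻¹' sets j) := by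
          apply Finset.prod_congr rfl
          intro j hj
          rw [hset j hj]
  · intro i hi
    apply MeasurableSet.biInter (Finset.countable_toSet _)
    intro j hj
    have hjS : j ∈ S := (Finset.mem_filter.mp hj).1
    exact hsets j hjS

end Reindex

section Integrals

lemma measurable_exponentialPDF' (r : ℝ) : Measurable (exponentialPDF r) :=
  (measurable_exponentialPDFReal r).ennreal_ofReal

lemma lintegral_exp_expMeasure {s : ℝ} (hs : 0 ≤ s) :
    ∫⁻ x, ENNReal.ofReal (Real.exp (-(s * x))) ∂(expMeasure 1)
      = ENNReal.ofReal (1 / (1 + s)) := by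
  have h1s : (0:ℝ) < 1 + s := by linarith
  rw [expMeasure, lintegral_withDensity_eq_lintegral_mul _ (measurable_exponentialPDF' 1)
    (by exact ENNReal.measurable_ofReal.comp (Real.measurable_exp.comp
      ((measurable_id.const_mul s).neg)))]
  have hpt : ∀ x, (exponentialPDF 1 * fun x => ENNReal.ofReal (Real.exp (-(s * x)))) x
      = ENNReal.ofReal (1 / (1 + s)) * exponentialPDF (1 + s) x := by
    intro x
    rcases lt_or_ge x 0 with hx | hx
    · simp [Pi.mul_apply, exponentialPDF_of_neg hx]
    · rw [Pi.mul_apply, exponentialPDF_of_nonneg hx, exponentialPDF_of_nonneg hx,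
        ← ENNReal.ofReal_mul (by positivity), ← ENNReal.ofReal_mul (by positivity)]
      congr 1
      rw [one_mul, one_mul, ← Real.exp_add, one_div, inv_mul_cancel_left₀ h1s.ne']
      congr 1
      ring
  rw [lintegral_congr hpt, lintegral_const_mul _ (measurable_exponentialPDF' (1 + s)),
    lintegral_exponentialPDF_eq_one h1s, mul_one]

lemma unif_indicator_Iic {p : ℝ} (hp0 : 0 < p) (hp1 : p ≤ 1) :
    ∫⁻ u, (Set.Iic p).indicator (fun _ => (1 : ℝ≥0∞)) u ∂unifMeasure
      = ENNReal.ofReal p := by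
  rw [unifMeasure, lintegral_indicator measurableSet_Iic, setLIntegral_one,
    Measure.restrict_apply measurableSet_Iic]
  have : Set.Iic p ∩ Set.Ioc 0 1 = Set.Ioc 0 p := by
    ext u
    simp only [Set.mem_inter_iff, Set.mem_Iic, Set.mem_Ioc]
    constructor
    · rintro ⟨h1, h2, h3⟩; exact ⟨h2, h1⟩
    · rintro ⟨h1, h2⟩; exact ⟨h2, h1, h2.trans hp1⟩
  rw [this, Real.volume_Ioc, sub_zero]

lemma unif_indicator_Ioi {p : ℝ} (hp0 : 0 < p) :
    ∫⁻ u, ((Set.Iic p)ᶜ).indicator (fun _ => (1 : ℝ≥0∞)) u ∂unifMeasure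
      = ENNReal.ofReal (1 - p) := by
  rw [unifMeasure, lintegral_indicator measurableSet_Iic.compl, setLIntegral_one,
    Measure.restrict_apply measurableSet_Iic.compl]
  have : (Set.Iic p)ᶜ ∩ Set.Ioc 0 1 = Set.Ioc p 1 := by
    ext u
    simp only [Set.mem_inter_iff, Set.mem_compl_iff, Set.mem_Iic, Set.mem_Ioc, not_le]
    constructor
    · rintro ⟨h1, _, h3⟩; exact ⟨h1, h3⟩
    · rintro ⟨h1, h2⟩; exact ⟨h1, hp0.trans h1, h2⟩
  rw [this, Real.volume_Ioc]

end Integrals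

section Lyapunov

/-- Linear Lyapunov function controlling the resolvent of the birth-and-death process. -/
def hFun (μ ν γ : ℝ) (x : ℝ) : ℝ :=
  (μ + ν) / (γ - (μ - ν)) * x + μ * (1 + (μ + ν) / (γ - (μ - ν))) / γ

variable {μ ν γ : ℝ}

lemma gamma_pos (hγ : max (μ - ν) 0 < γ) : 0 < γ :=
  lt_of_le_of_lt (le_max_right _ _) hγ

lemma c_pos (hγ : max (μ - ν) 0 < γ) : 0 < γ - (μ - ν) :=
  sub_pos.2 (lt_of_le_of_lt (le_max_left _ _) hγ)

lemma hFun_nonneg (hμ : 0 < μ) (hν : 0 < ν) (hγ : max (μ - ν) 0 < γ) {x : ℝ} (hx : 0 ≤ x) :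
    0 ≤ hFun μ ν γ x := by
  have h1 := gamma_pos hγ
  have h2 := c_pos hγ
  have hA : 0 ≤ (μ + ν) / (γ - (μ - ν)) := by positivity
  have hB : 0 ≤ μ * (1 + (μ + ν) / (γ - (μ - ν))) / γ := by positivity
  have := mul_nonneg hA hx
  unfold hFun; linarith

lemma key1 (hμ : 0 < μ) (hν : 0 < ν) (hγ : max (μ - ν) 0 < γ) {x : ℝ} (hx : 1 ≤ x) :
    (μ * x) / (μ * x + ν * x + γ) * (1 + hFun μ ν γ (x + 1))
      + (ν * x) / (μ * x + ν * x + γ) * (1 + hFun μ ν γ (x - 1)) ≤ hFun μ ν γ x := by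
  have hγ0 := gamma_pos hγ
  have hc := c_pos hγ
  have hx0 : (0:ℝ) < x := lt_of_lt_of_le one_pos hx
  set A := (μ + ν) / (γ - (μ - ν)) with hAdef
  set B := μ * (1 + A) / γ with hBdef
  have hA : A * (γ - (μ - ν)) = μ + ν := div_mul_cancel₀ _ hc.ne'
  have hB : B * γ = μ * (1 + A) := div_mul_cancel₀ _ hγ0.ne'
  have hA0 : 0 ≤ A := by rw [hAdef]; positivity
  have hB0 : 0 ≤ B := by rw [hBdef]; positivity
  have hD : (0:ℝ) < μ * x + ν * x + γ := by positivity
  have hFx : hFun μ ν γ x = A * x + B := rfl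
  have hFx1 : hFun μ ν γ (x + 1) = A * (x + 1) + B := rfl
  have hFx2 : hFun μ ν γ (x - 1) = A * (x - 1) + B := rfl
  have h1 : x * (A * (γ - (μ - ν)) - (μ + ν)) = 0 := by rw [hA]; ring
  have goal' : μ * x * (1 + (A * (x + 1) + B)) + ν * x * (1 + (A * (x - 1) + B))
      ≤ (A * x + B) * (μ * x + ν * x + γ) := by
    nlinarith [h1, mul_nonneg hB0 hγ0.le]
  have heq : (μ * x) / (μ * x + ν * x + γ) * (1 + hFun μ ν γ (x + 1))
      + (ν * x) / (μ * x + ν * x + γ) * (1 + hFun μ ν γ (x - 1))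
      = (μ * x * (1 + (A * (x + 1) + B)) + ν * x * (1 + (A * (x - 1) + B)))
          / (μ * x + ν * x + γ) := by
    rw [hFx1, hFx2]; field_simp
  rw [hFx, heq, div_le_iff₀ hD]
  exact goal'

lemma key0 (hμ : 0 < μ) (hν : 0 < ν) (hγ : max (μ - ν) 0 < γ) :
    μ / (μ + γ) * (1 + hFun μ ν γ 1) ≤ hFun μ ν γ 0 := by
  have hγ0 := gamma_pos hγ
  have hc := c_pos hγ
  set A := (μ + ν) / (γ - (μ - ν)) with hAdef
  set B := μ * (1 + A) / γ with hBdef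
  have hB : B * γ = μ * (1 + A) := div_mul_cancel₀ _ hγ0.ne'
  have hF1 : hFun μ ν γ 1 = A * 1 + B := rfl
  have hF0 : hFun μ ν γ 0 = A * 0 + B := rfl
  have hD : (0:ℝ) < μ + γ := by positivity
  rw [hF1, hF0, div_mul_eq_mul_div, div_le_iff₀ hD]
  nlinarith [hB]

/-- The master one-step inequality. -/
lemma keyIneq (hμ : 0 < μ) (hν : 0 < ν) (hγ : max (μ - ν) 0 < γ) (z : ℕ) :
    μ * ((max z 1 : ℕ) : ℝ) / bdR μ ν z * (bdR μ ν z / (bdR μ ν z + γ))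
        * (1 + hFun μ ν γ ((z + 1 : ℕ) : ℝ))
      + ν * z / bdR μ ν z * (bdR μ ν z / (bdR μ ν z + γ))
        * (1 + hFun μ ν γ ((z - 1 : ℕ) : ℝ))
    ≤ hFun μ ν γ z := by
  have hγ0 := gamma_pos hγ
  have hR : 0 < bdR μ ν z := by
    have h1 : (1:ℝ) ≤ ((max z 1 : ℕ) : ℝ) := by exact_mod_cast le_max_right z 1
    have h2 : (0:ℝ) ≤ ν * z := by positivity
    have : μ ≤ μ * ((max z 1 : ℕ) : ℝ) := le_mul_of_one_le_right hμ.le h1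
    unfold bdR; linarith
  have hcancel : ∀ a : ℝ, a / bdR μ ν z * (bdR μ ν z / (bdR μ ν z + γ)) = a / (bdR μ ν z + γ) := by
    intro a
    have hRγ : (0:ℝ) < bdR μ ν z + γ := by positivity
    field_simp
  rw [hcancel, hcancel]
  rcases z with _ | k
  · have hbd : bdR μ ν 0 = μ := by norm_num [bdR]
    have h1 : ((max 0 1 : ℕ) : ℝ) = 1 := by norm_num
    rw [hbd, h1]
    simpa using key0 hμ hν hγ
  · have hbd : bdR μ ν (k + 1) = μ * ((k:ℝ) + 1) + ν * ((k:ℝ) + 1) := by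
      have : max (k + 1) 1 = k + 1 := max_eq_left (Nat.le_add_left 1 k)
      rw [bdR, this]; push_cast; ring
    have h1 : ((max (k + 1) 1 : ℕ) : ℝ) = (k:ℝ) + 1 := by
      rw [max_eq_left (Nat.le_add_left 1 k)]; push_cast; ring
    have h2 : ((k + 1 + 1 : ℕ) : ℝ) = ((k:ℝ) + 1) + 1 := by push_cast; ring
    have h3 : ((k + 1 - 1 : ℕ) : ℝ) = ((k:ℝ) + 1) - 1 := by norm_num
    have h4 : ((k + 1 : ℕ) : ℝ) = (k:ℝ) + 1 := by push_cast; ring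
    rw [hbd, h1, h2, h3, h4]
    have := key1 hμ hν hγ (x := (k:ℝ) + 1) (by linarith [Nat.cast_nonneg (α := ℝ) k])
    calc μ * ((k:ℝ) + 1) / (μ * ((k:ℝ) + 1) + ν * ((k:ℝ) + 1) + γ)
          * (1 + hFun μ ν γ (((k:ℝ) + 1) + 1))
        + ν * ((k:ℝ) + 1) / (μ * ((k:ℝ) + 1) + ν * ((k:ℝ) + 1) + γ)
          * (1 + hFun μ ν γ (((k:ℝ) + 1) - 1)) ≤ hFun μ ν γ ((k:ℝ) + 1) := this
      _ = hFun μ ν γ ((k:ℝ) + 1) := rfl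

end Lyapunov

section Main

variable {μ ν γ : ℝ}

lemma sum_bound (hμ : 0 < μ) (hν : 0 < ν) (hγ : max (μ - ν) 0 < γ)
    (P : Measure Ω) [IsProbabilityMeasure P] :
    ∀ (N z : ℕ) (E U : ℕ → Ω → ℝ), DrivingNoise P E U →
      ∫⁻ ω, ∑ n ∈ Finset.range N,
          ENNReal.ofReal (Real.exp (-γ * bdTimes μ ν z E U (n + 1) ω)) ∂P
        ≤ ENNReal.ofReal (hFun μ ν γ z) := by
  intro N
  induction N with
  | zero =>
      intro z E U _
      simp only [Finset.range_zero, Finset.sum_empty, lintegral_zero]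
      exact zero_le
  | succ N ih =>
      intro z E U hEU
      obtain ⟨hE, hU, hind, hmapE, hmapU⟩ := hEU
      have hγ0 := gamma_pos hγ
      have hmax1 : (1:ℝ) ≤ ((max z 1 : ℕ) : ℝ) := by exact_mod_cast le_max_right z 1
      have hR : 0 < bdR μ ν z := by
        have h2 : (0:ℝ) ≤ ν * z := by positivity
        have h3 : μ ≤ μ * ((max z 1 : ℕ) : ℝ) := le_mul_of_one_le_right hμ.le hmax1
        unfold bdR; linarith
      set R := bdR μ ν z with hRdef
      set p : ℝ := μ * ((max z 1 : ℕ) : ℝ) / R with hpdef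
      have hp0 : 0 < p :=
        div_pos (mul_pos hμ (lt_of_lt_of_le one_pos hmax1)) hR
      have hp1 : p ≤ 1 := by
        rw [hpdef, div_le_one hR, hRdef]
        have : (0:ℝ) ≤ ν * z := by positivity
        unfold bdR; linarith
      have h1p : 1 - p = ν * z / R := by
        rw [hpdef, eq_div_iff hR.ne', sub_mul, one_mul, div_mul_cancel₀ _ hR.ne', hRdef]
        unfold bdR; ring
      have hfrac : 1 / (1 + γ / R) = R / (R + γ) := by
        rw [div_eq_div_iff (by positivity) (by positivity)]
        field_simp
      have hfrac0 : (0:ℝ) ≤ 1 / (1 + γ / R) := by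
        rw [hfrac]; positivity
      -- shifted driving noise
      set E' : ℕ → Ω → ℝ := fun k => E (k + 1) with hE'def
      set U' : ℕ → Ω → ℝ := fun k => U (k + 1) with hU'def
      have hEU' : DrivingNoise P E' U' := by
        refine ⟨fun n => hE (n + 1), fun n => hU (n + 1), ?_, fun n => hmapE (n + 1),
          fun n => hmapU (n + 1)⟩
        have hinj : Function.Injective (Sum.map Nat.succ Nat.succ : ℕ ⊕ ℕ → ℕ ⊕ ℕ) := by
          intro a b hab
          cases a <;> cases b <;> simp [Sum.map] at hab <;> simp [hab]
        have h2 := iIndepFun_precomp hind _ hinj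
        have heq : (Sum.elim E' U' : ℕ ⊕ ℕ → Ω → ℝ)
            = fun j => Sum.elim E U (Sum.map Nat.succ Nat.succ j) := by
          funext j; cases j <;> rfl
        rw [heq]; exact h2
      -- σ-algebra split
      set s : ℕ ⊕ ℕ → MeasurableSpace Ω :=
        fun i => MeasurableSpace.comap (Sum.elim E U i) inferInstance with hsdef
      have hmeasSum : ∀ i, Measurable (Sum.elim E U i) := by
        rintro (n | n)
        · exact hE n
        · exact hU n
      have hs_le : ∀ i, s i ≤ (inferInstance : MeasurableSpace Ω) := fun i => (hmeasSum i).comap_le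
      set t : Set (ℕ ⊕ ℕ) := {Sum.inl 0, Sum.inr 0} with htdef
      have hiI : iIndep s P := (iIndepFun_iff_iIndep _ _ _).1 hind
      have hindep2 : Indep (⨆ i ∈ t, s i) (⨆ i ∈ tᶜ, s i) P := indep_biSup_compl hs_le hiI t
      have hMf_le : (⨆ i ∈ t, s i) ≤ (inferInstance : MeasurableSpace Ω) :=
        iSup₂_le fun i _ => hs_le i
      have hMg_le : (⨆ i ∈ tᶜ, s i) ≤ (inferInstance : MeasurableSpace Ω) :=
        iSup₂_le fun i _ => hs_le i
      have hE0 : Measurable[⨆ i ∈ t, s i] (E 0) :=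
        Measurable.of_comap_le (le_biSup s (show (Sum.inl 0 : ℕ ⊕ ℕ) ∈ t by simp [htdef]))
      have hU0 : Measurable[⨆ i ∈ t, s i] (U 0) :=
        Measurable.of_comap_le (le_biSup s (show (Sum.inr 0 : ℕ ⊕ ℕ) ∈ t by simp [htdef]))
      have hE'meas : ∀ n, Measurable[⨆ i ∈ tᶜ, s i] (E' n) := fun n =>
        Measurable.of_comap_le (le_biSup s (show (Sum.inl (n + 1) : ℕ ⊕ ℕ) ∈ tᶜ by simp [htdef]))
      have hU'meas : ∀ n, Measurable[⨆ i ∈ tᶜ, s i] (U' n) := fun n =>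
        Measurable.of_comap_le (le_biSup s (show (Sum.inr (n + 1) : ℕ ⊕ ℕ) ∈ tᶜ by simp [htdef]))
      -- the basic random variables
      set f0 : Ω → ℝ≥0∞ := fun ω => ENNReal.ofReal (Real.exp (-(γ / R * E 0 ω))) with hf0def
      set χp : Ω → ℝ≥0∞ := fun ω => (Set.Iic p).indicator (fun _ => 1) (U 0 ω) with hχpdef
      set χm : Ω → ℝ≥0∞ := fun ω => ((Set.Iic p)ᶜ).indicator (fun _ => 1) (U 0 ω) with hχmdef
      set G : ℕ → Ω → ℝ≥0∞ := fun x ω => ∑ n ∈ Finset.range N,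
        ENNReal.ofReal (Real.exp (-γ * bdTimes μ ν x E' U' (n + 1) ω)) with hGdef
      -- measurability
      have hf0m : Measurable f0 := (((hE 0).const_mul (γ / R)).neg.exp).ennreal_ofReal
      have hχpm : Measurable χp := (measurable_const.indicator measurableSet_Iic).comp (hU 0)
      have hχmm : Measurable χm :=
        (measurable_const.indicator measurableSet_Iic.compl).comp (hU 0)
      have hGm : ∀ x, Measurable (G x) := fun x => Finset.measurable_sum _ fun n _ =>
        (((measurable_bdTimes μ ν x E' U' (fun k => hE (k + 1)) (fun k => hU (k + 1))
          (n + 1)).const_mul (-γ)).exp).ennreal_ofReal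
      have hαpm : Measurable[⨆ i ∈ t, s i] (fun ω => χp ω * f0 ω) :=
        Measurable.mul ((measurable_const.indicator measurableSet_Iic).comp hU0)
          (((hE0.const_mul (γ / R)).neg.exp).ennreal_ofReal)
      have hαmm : Measurable[⨆ i ∈ t, s i] (fun ω => χm ω * f0 ω) :=
        Measurable.mul ((measurable_const.indicator measurableSet_Iic.compl).comp hU0)
          (((hE0.const_mul (γ / R)).neg.exp).ennreal_ofReal)
      have hβm : ∀ x : ℕ, Measurable[⨆ i ∈ tᶜ, s i] (fun ω => (1 : ℝ≥0∞) + G x ω) := fun x =>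
        Measurable.add measurable_const (Finset.measurable_sum _ fun n _ =>
          (((measurable_bdTimes (m := ⨆ i ∈ tᶜ, s i) μ ν x E' U' hE'meas hU'meas
            (n + 1)).const_mul (-γ)).exp).ennreal_ofReal)
      -- pointwise decomposition
      have hpoint : (fun ω => ∑ n ∈ Finset.range (N + 1),
            ENNReal.ofReal (Real.exp (-γ * bdTimes μ ν z E U (n + 1) ω)))
          = fun ω => χp ω * f0 ω * (1 + G (z + 1) ω) + χm ω * f0 ω * (1 + G (z - 1) ω) := by
        funext ω
        have hjump : ∀ n : ℕ, bdTimes μ ν z E U (n + 1 + 1) ω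
            = E 0 ω / R + bdTimes μ ν (bdNext μ ν z (U 0 ω)) E' U' (n + 1) ω := fun n =>
          jumpT_shift (bdR μ ν) (bdNext μ ν) z E U (n + 1) ω
        have hT1 : bdTimes μ ν z E U 1 ω = 0 + E 0 ω / R := by
          simp [bdTimes, jumpT, chainOf, hRdef]
        rw [Finset.sum_range_succ']
        have hterm0 : ENNReal.ofReal (Real.exp (-γ * bdTimes μ ν z E U (0 + 1) ω)) = f0 ω := by
          have : -γ * bdTimes μ ν z E U (0 + 1) ω = -(γ / R * E 0 ω) := by
            rw [show (0:ℕ) + 1 = 1 from rfl, hT1]; ring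
          rw [this]
        by_cases hcase : U 0 ω ≤ p
        · have hup : bdNext μ ν z (U 0 ω) = z + 1 := by
            unfold bdNext
            rw [if_pos]
            exact (le_div_iff₀ hR).1 hcase
          have hχ1 : χp ω = 1 := Set.indicator_of_mem (Set.mem_Iic.2 hcase) _
          have hχ0 : χm ω = 0 :=
            Set.indicator_of_notMem (Set.notMem_compl_iff.2 (Set.mem_Iic.2 hcase)) _
          rw [hχ1, hχ0]
          have hterms : ∀ i ∈ Finset.range N,
              ENNReal.ofReal (Real.exp (-γ * bdTimes μ ν z E U (i + 1 + 1) ω))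
                = f0 ω * ENNReal.ofReal (Real.exp (-γ * bdTimes μ ν (z + 1) E' U' (i + 1) ω)) := by
            intro i _
            rw [hjump i, hup, ← ENNReal.ofReal_mul (Real.exp_nonneg _), ← Real.exp_add]
            congr 2
            ring
          rw [Finset.sum_congr rfl hterms, hterm0, ← Finset.mul_sum]
          rw [one_mul, zero_mul, zero_mul, add_zero, mul_add, mul_one, add_comm]
        · have hup : bdNext μ ν z (U 0 ω) = z - 1 := by
            unfold bdNext
            rw [if_neg]
            intro hcon
            exact hcase ((le_div_iff₀ hR).2 hcon)
          have hχ1 : χm ω = 1 :=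
            Set.indicator_of_mem (Set.mem_compl (by simpa using hcase)) _
          have hχ0 : χp ω = 0 := Set.indicator_of_notMem (by simpa using hcase) _
          rw [hχ1, hχ0]
          have hterms : ∀ i ∈ Finset.range N,
              ENNReal.ofReal (Real.exp (-γ * bdTimes μ ν z E U (i + 1 + 1) ω))
                = f0 ω * ENNReal.ofReal (Real.exp (-γ * bdTimes μ ν (z - 1) E' U' (i + 1) ω)) := by
            intro i _
            rw [hjump i, hup, ← ENNReal.ofReal_mul (Real.exp_nonneg _), ← Real.exp_add]
            congr 2
            ring
          rw [Finset.sum_congr rfl hterms, hterm0, ← Finset.mul_sum]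
          rw [one_mul, zero_mul, zero_mul, zero_add, mul_add, mul_one, add_comm]
      -- independence splittings
      have hsplitp : ∫⁻ ω, χp ω * f0 ω * (1 + G (z + 1) ω) ∂P
          = (∫⁻ ω, χp ω * f0 ω ∂P) * ∫⁻ ω, (1 + G (z + 1) ω) ∂P :=
        lintegral_mul_eq_lintegral_mul_lintegral_of_independent_measurableSpace
          hMf_le hMg_le hindep2 hαpm (hβm (z + 1))
      have hsplitm : ∫⁻ ω, χm ω * f0 ω * (1 + G (z - 1) ω) ∂P
          = (∫⁻ ω, χm ω * f0 ω ∂P) * ∫⁻ ω, (1 + G (z - 1) ω) ∂P :=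
        lintegral_mul_eq_lintegral_mul_lintegral_of_independent_measurableSpace
          hMf_le hMg_le hindep2 hαmm (hβm (z - 1))
      have hIndepUE : IndepFun (U 0) (E 0) P :=
        hind.indepFun (show (Sum.inr 0 : ℕ ⊕ ℕ) ≠ Sum.inl 0 by simp)
      have hsplitαp : ∫⁻ ω, χp ω * f0 ω ∂P = (∫⁻ ω, χp ω ∂P) * ∫⁻ ω, f0 ω ∂P := by
        have hcomp : IndepFun χp f0 P :=
          hIndepUE.comp (measurable_const.indicator measurableSet_Iic)
            (((measurable_id.const_mul (γ / R)).neg.exp).ennreal_ofReal)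
        simpa using lintegral_mul_eq_lintegral_mul_lintegral_of_indepFun hχpm hf0m hcomp
      have hsplitαm : ∫⁻ ω, χm ω * f0 ω ∂P = (∫⁻ ω, χm ω ∂P) * ∫⁻ ω, f0 ω ∂P := by
        have hcomp : IndepFun χm f0 P :=
          hIndepUE.comp (measurable_const.indicator measurableSet_Iic.compl)
            (((measurable_id.const_mul (γ / R)).neg.exp).ennreal_ofReal)
        simpa using lintegral_mul_eq_lintegral_mul_lintegral_of_indepFun hχmm hf0m hcomp
      -- values
      have hval_χp : ∫⁻ ω, χp ω ∂P = ENNReal.ofReal p := by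
        have h1 : ∫⁻ ω, χp ω ∂P
            = ∫⁻ u, (Set.Iic p).indicator (fun _ => (1:ℝ≥0∞)) u ∂(Measure.map (U 0) P) :=
          (lintegral_map (measurable_const.indicator measurableSet_Iic) (hU 0)).symm
        rw [h1, hmapU 0, unif_indicator_Iic hp0 hp1]
      have hval_χm : ∫⁻ ω, χm ω ∂P = ENNReal.ofReal (1 - p) := by
        have h1 : ∫⁻ ω, χm ω ∂P
            = ∫⁻ u, ((Set.Iic p)ᶜ).indicator (fun _ => (1:ℝ≥0∞)) u ∂(Measure.map (U 0) P) :=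
          (lintegral_map (measurable_const.indicator measurableSet_Iic.compl) (hU 0)).symm
        rw [h1, hmapU 0, unif_indicator_Ioi hp0]
      have hval_f0 : ∫⁻ ω, f0 ω ∂P = ENNReal.ofReal (1 / (1 + γ / R)) := by
        have h1 : ∫⁻ ω, f0 ω ∂P
            = ∫⁻ x, ENNReal.ofReal (Real.exp (-(γ / R * x))) ∂(Measure.map (E 0) P) :=
          (lintegral_map (((measurable_id.const_mul (γ / R)).neg.exp).ennreal_ofReal)
            (hE 0)).symm
        rw [h1, hmapE 0, lintegral_exp_expMeasure (div_nonneg hγ0.le hR.le)]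
      have hval_β : ∀ x : ℕ, ∫⁻ ω, (1 + G x ω) ∂P ≤ 1 + ENNReal.ofReal (hFun μ ν γ x) := by
        intro x
        rw [lintegral_add_left measurable_const, lintegral_one, measure_univ]
        exact add_le_add_right (ih x E' U' hEU') 1
      -- assemble
      have htermP : ∫⁻ ω, χp ω * f0 ω * (1 + G (z + 1) ω) ∂P
          ≤ ENNReal.ofReal (p * (1 / (1 + γ / R)) * (1 + hFun μ ν γ ((z + 1 : ℕ) : ℝ))) := by
        rw [hsplitp, hsplitαp, hval_χp, hval_f0]
        refine le_trans (mul_le_mul_right (hval_β (z + 1)) _) ?_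
        rw [← ENNReal.ofReal_one, ← ENNReal.ofReal_add one_pos.le
            (hFun_nonneg hμ hν hγ (Nat.cast_nonneg _)),
          ← ENNReal.ofReal_mul hp0.le, ← ENNReal.ofReal_mul (mul_nonneg hp0.le hfrac0)]
      have htermM : ∫⁻ ω, χm ω * f0 ω * (1 + G (z - 1) ω) ∂P
          ≤ ENNReal.ofReal ((1 - p) * (1 / (1 + γ / R))
              * (1 + hFun μ ν γ ((z - 1 : ℕ) : ℝ))) := by
        rw [hsplitm, hsplitαm, hval_χm, hval_f0]
        refine le_trans (mul_le_mul_right (hval_β (z - 1)) _) ?_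
        rw [← ENNReal.ofReal_one, ← ENNReal.ofReal_add one_pos.le
            (hFun_nonneg hμ hν hγ (Nat.cast_nonneg _)),
          ← ENNReal.ofReal_mul (sub_nonneg.2 hp1),
          ← ENNReal.ofReal_mul (mul_nonneg (sub_nonneg.2 hp1) hfrac0)]
      have hreal : p * (1 / (1 + γ / R)) * (1 + hFun μ ν γ ((z + 1 : ℕ) : ℝ))
          + (1 - p) * (1 / (1 + γ / R)) * (1 + hFun μ ν γ ((z - 1 : ℕ) : ℝ))
          ≤ hFun μ ν γ z := by
        rw [hfrac, h1p, hpdef]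
        exact keyIneq hμ hν hγ z
      calc ∫⁻ ω, ∑ n ∈ Finset.range (N + 1),
              ENNReal.ofReal (Real.exp (-γ * bdTimes μ ν z E U (n + 1) ω)) ∂P
          = ∫⁻ ω, (χp ω * f0 ω * (1 + G (z + 1) ω) + χm ω * f0 ω * (1 + G (z - 1) ω)) ∂P := by
            rw [hpoint]
        _ = (∫⁻ ω, χp ω * f0 ω * (1 + G (z + 1) ω) ∂P)
            + ∫⁻ ω, χm ω * f0 ω * (1 + G (z - 1) ω) ∂P :=
            lintegral_add_left ((hχpm.mul hf0m).mul (measurable_const.add (hGm (z + 1)))) _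
        _ ≤ ENNReal.ofReal (p * (1 / (1 + γ / R)) * (1 + hFun μ ν γ ((z + 1 : ℕ) : ℝ)))
            + ENNReal.ofReal ((1 - p) * (1 / (1 + γ / R))
                * (1 + hFun μ ν γ ((z - 1 : ℕ) : ℝ))) := add_le_add htermP htermM
        _ = ENNReal.ofReal (p * (1 / (1 + γ / R)) * (1 + hFun μ ν γ ((z + 1 : ℕ) : ℝ))
            + (1 - p) * (1 / (1 + γ / R)) * (1 + hFun μ ν γ ((z - 1 : ℕ) : ℝ))) :=
            (ENNReal.ofReal_add
              (mul_nonneg (mul_nonneg hp0.le hfrac0)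
                (by nlinarith [hFun_nonneg hμ hν hγ (Nat.cast_nonneg (α := ℝ) (z + 1))]))
              (mul_nonneg (mul_nonneg (sub_nonneg.2 hp1) hfrac0)
                (by nlinarith [hFun_nonneg hμ hν hγ (Nat.cast_nonneg (α := ℝ) (z - 1))]))).symm
        _ ≤ ENNReal.ofReal (hFun μ ν γ z) := ENNReal.ofReal_le_ofReal hreal

end Main

open Classical in
/-- Corollary 2 (series of birth instants): for the birth-and-death process with rates
`q(z,z+1) = μ_Z (z ∨ 1)`, `q(z,z−1) = ν z` started from `z`, with `(σ_n)` its sequence of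
birth instants, `E_z(Σ_n e^{-γ σ_n}) < ∞` for any `γ > max(μ_Z − ν, 0)`. -/
theorem expected_birth_series_finite {Ω : Type*} [MeasurableSpace Ω] (P : Measure Ω)
    [IsProbabilityMeasure P] (μZ ν : ℝ) (hμ : 0 < μZ) (hν : 0 < ν) (z : ℕ)
    (E U : ℕ → Ω → ℝ) (hEU : DrivingNoise P E U)
    (γ : ℝ) (hγ : max (μZ - ν) 0 < γ) :
    (∫⁻ ω, ∑' n : ℕ,
        if bdUp μZ ν z U n ω then
          ENNReal.ofReal (Real.exp (-γ * bdTimes μZ ν z E U (n + 1) ω)) else 0 ∂P) < ⊤ := by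
  obtain ⟨hE, hU, -, -, -⟩ := id hEU
  refine lt_of_le_of_lt ?_ (ENNReal.ofReal_lt_top (r := hFun μZ ν γ z))
  have hmono : ∀ ω, (∑' n : ℕ, if bdUp μZ ν z U n ω then
        ENNReal.ofReal (Real.exp (-γ * bdTimes μZ ν z E U (n + 1) ω)) else 0)
      ≤ ⨆ N, ∑ n ∈ Finset.range N,
          ENNReal.ofReal (Real.exp (-γ * bdTimes μZ ν z E U (n + 1) ω)) := by
    intro ω
    calc (∑' n : ℕ, if bdUp μZ ν z U n ω then
            ENNReal.ofReal (Real.exp (-γ * bdTimes μZ ν z E U (n + 1) ω)) else 0)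
        ≤ ∑' n : ℕ, ENNReal.ofReal (Real.exp (-γ * bdTimes μZ ν z E U (n + 1) ω)) :=
          ENNReal.tsum_le_tsum (fun n => by split_ifs <;> simp)
      _ = ⨆ N, ∑ n ∈ Finset.range N,
            ENNReal.ofReal (Real.exp (-γ * bdTimes μZ ν z E U (n + 1) ω)) :=
          ENNReal.tsum_eq_iSup_nat
  refine le_trans (lintegral_mono hmono) ?_
  have hmeas : ∀ N : ℕ, Measurable (fun ω => ∑ n ∈ Finset.range N,
      ENNReal.ofReal (Real.exp (-γ * bdTimes μZ ν z E U (n + 1) ω))) := fun N =>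
    Finset.measurable_sum _ fun n _ =>
      (((measurable_bdTimes μZ ν z E U hE hU (n + 1)).const_mul (-γ)).exp).ennreal_ofReal
  have hmono2 : Monotone (fun N : ℕ => fun ω => ∑ n ∈ Finset.range N,
      ENNReal.ofReal (Real.exp (-γ * bdTimes μZ ν z E U (n + 1) ω))) := by
    intro i j hij ω
    exact Finset.sum_le_sum_of_subset (Finset.range_subset_range.2 hij)
  rw [lintegral_iSup hmeas hmono2]
  exact iSup_le fun N => sum_bound hμ hν hγ P N z E U hEU

end FileSharing
end
end

section
/- Let μ_Z − ν > μ_W > 0. Let (Y(t)) be a Yule process with rate μ_W started from w ≥ 1, let (Z(t)) be an independent birth-and-death process with rates q(z,z+1) = μ_Z(z∨1), q(z,z−1) = νz started from z ≥ 0, with birth instants (σ_n), and let (W(t)) be the process obtained from Y by killing one individual together with its progeny at each σ_n. Then H₀ = inf{t ≥ 0 : W(t) = 0} is almost surely finite. -/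
open MeasureTheory ProbabilityTheory Real Filter Set

noncomputable section

namespace FileSharing

variable {Ω : Type*} [MeasurableSpace Ω] {S : Type*}

/-- The index of the killing that empties the killed population: the first `n` (as an
extended natural) such that `W(σ_n) = 0`, where `σ_n` may be random. -/
def killIdxR (W : ℝ → Ω → ℕ) (σ : ℕ → Ω → ℝ) (ω : Ω) : ℕ∞ :=
  sInf {e : ℕ∞ | ∃ n : ℕ, e = (n : ℕ∞) ∧ W (σ n ω) ω = 0}

open Classical in
/-- The interacting branching system of Section 3: `Y` is a Yule process with rate `μ_W`
started from `w` individuals, `Z` an independent birth-and-death process with rates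
`q(z,z+1) = μ_Z(z∨1)`, `q(z,z−1) = νz` started from `z`, and `W` is obtained from `Y` by
killing one individual together with its future progeny at each birth instant `σ_n` of
`Z` as long as the population is non-empty:
`W(t) = Y(t) − Σ_{i ≤ κ} X_i(t) 1_{σ_i ≤ t}`, where `κ` is the first `n` with
`W(σ_n) = 0` and the progeny `(X_i(σ_i + ·))` of the `i`-th killed individual is a Yule
process with rate `μ_W` started from one individual, driven by independent noise. -/
def KilledYuleRep (P : Measure Ω) (μW μZ ν : ℝ) (w z : ℕ)
    (W Z Y : ℝ → Ω → ℕ) : Prop :=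
  ∃ (EY EZ UZ : ℕ → Ω → ℝ) (F : ℕ → ℕ → Ω → ℝ) (X : ℕ → ℝ → Ω → ℕ),
    (∀ n, Measurable (EY n)) ∧ (∀ n, Measurable (EZ n)) ∧ (∀ n, Measurable (UZ n)) ∧
    (∀ i n, Measurable (F i n)) ∧
    iIndepFun
      (fun p : (ℕ ⊕ ℕ) ⊕ (ℕ ⊕ ℕ × ℕ) =>
        Sum.elim (Sum.elim EY EZ) (Sum.elim UZ fun q => F q.1 q.2) p) P ∧
    (∀ n, Measure.map (EY n) P = expMeasure 1) ∧
    (∀ n, Measure.map (EZ n) P = expMeasure 1) ∧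
    (∀ n, Measure.map (UZ n) P = unifMeasure) ∧
    (∀ i n, Measure.map (F i n) P = expMeasure 1) ∧
    Y = yule μW w EY ∧ Z = bdProc μZ ν z EZ UZ ∧
    (∀ i, ∀ t : ℝ, 0 ≤ t → ∀ ω,
      X i (bdBirthTime μZ ν z EZ UZ i ω + t) ω = yule μW 1 (F i) t ω) ∧
    (∀ t : ℝ, 0 ≤ t → ∀ ω, (W t ω : ℤ) =
      (Y t ω : ℤ) - ∑' i : ℕ,
        if bdBirthTime μZ ν z EZ UZ i ω ≤ t ∧
            (i : ℕ∞) ≤ killIdxR W (bdBirthTime μZ ν z EZ UZ) ω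
          then (X i t ω : ℤ) else 0)

/-- Extinction time of the killed process. -/
def hitZero (W : ℝ → Ω → ℕ) (ω : Ω) : ℝ := sInf {t : ℝ | 0 ≤ t ∧ W t ω = 0}


section SeqLemmas
open Finset Topology
/-- log increment bounds -/
lemma log_succ_sub_le {y : ℝ} (hy : 0 < y) : Real.log (y+1) - Real.log y ≤ 1/y := by
  rw [← Real.log_div (by positivity) (ne_of_gt hy)]
  have h := Real.log_le_sub_one_of_pos (x := (y+1)/y) (by positivity)
  have : (y+1)/y - 1 = 1/y := by field_simp; ring
  linarith

lemma one_div_le_log_succ_sub {y : ℝ} (hy : 0 < y) : 1/(y+1) ≤ Real.log (y+1) - Real.log y := by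
  have h := Real.log_le_sub_one_of_pos (x := y/(y+1)) (by positivity)
  have e : Real.log (y/(y+1)) = Real.log y - Real.log (y+1) := by
    rw [Real.log_div (ne_of_gt hy) (by positivity)]
  have : y/(y+1) - 1 = -(1/(y+1)) := by field_simp; ring
  rw [e, this] at h
  linarith

/-- telescoping harmonic upper bound: `∑_{k<n} 1/(k+2) ≤ log (n+1)` -/
lemma sum_one_div_le_log (n : ℕ) : ∑ k ∈ range n, (1:ℝ)/(k+2) ≤ Real.log (n+1) := by
  have key : ∀ k : ℕ, (1:ℝ)/(k+2) ≤ Real.log (k+1+1) - Real.log (k+1) := by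
    intro k
    have := one_div_le_log_succ_sub (y := (k:ℝ)+1) (by positivity)
    convert this using 2 <;> ring
  calc ∑ k ∈ range n, (1:ℝ)/(k+2)
      ≤ ∑ k ∈ range n, (Real.log ((k+1)+1) - Real.log (k+1)) :=
        Finset.sum_le_sum (fun k _ => key k)
    _ = Real.log (n+1) - Real.log (0+1) := by
        have := Finset.sum_range_sub (f := fun k => Real.log (k+1)) n
        simpa using this
    _ ≤ Real.log (n+1) := by simp

/-- telescoping harmonic lower bound: `log (n+m+1) - log (m+1) ≤ ∑_{k<n} 1/(k+m+1)` -/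
lemma log_le_sum_one_div (n m : ℕ) :
    Real.log (n+m+1) - Real.log (m+1) ≤ ∑ k ∈ range n, (1:ℝ)/(k+m+1) := by
  have key : ∀ k : ℕ, Real.log ((k+m+1)+1) - Real.log (k+m+1) ≤ (1:ℝ)/(k+m+1) := by
    intro k
    have := log_succ_sub_le (y := (k:ℝ)+m+1) (by positivity)
    convert this using 2 <;> ring
  calc Real.log (n+m+1) - Real.log (m+1)
      = ∑ k ∈ range n, (Real.log ((k+1:ℕ)+m+1) - Real.log (k+m+1)) := by
        have := Finset.sum_range_sub (f := fun k => Real.log (k+m+1)) n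
        rw [this]
        norm_num
    _ = ∑ k ∈ range n, (Real.log ((k:ℝ)+1+m+1) - Real.log (k+m+1)) := by
        refine Finset.sum_congr rfl (fun k _ => ?_)
        push_cast
        ring_nf
    _ ≤ ∑ k ∈ range n, (1:ℝ)/(k+m+1) := by
        refine Finset.sum_le_sum (fun k _ => ?_)
        have := key k
        convert this using 3 <;> push_cast
        · rfl
        · ring

/-- Abel summation identity. -/
lemma abel_id (a b : ℕ → ℝ) (n : ℕ) :
    ∑ k ∈ range n, a k * b k
      = (∑ k ∈ range n, a k) * b n
        + ∑ k ∈ range n, (∑ j ∈ range (k+1), a j) * (b k - b (k+1)) := by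
  induction n with
  | zero => simp
  | succ n ih =>
    rw [Finset.sum_range_succ, Finset.sum_range_succ (f := fun k => (∑ j ∈ range (k+1), a j) * (b k - b (k+1))), ih,
      Finset.sum_range_succ (f := a)]
    ring


/-- Upper bound: partial sums `≤ c n + C` implies `∑ a_k/(k+1) ≤ c log(n+1) + c + 2C`. -/
lemma sum_div_succ_le (a : ℕ → ℝ) (ha : ∀ k, 0 ≤ a k) (c C : ℝ) (hc : 0 ≤ c) (hC : 0 ≤ C)
    (hA : ∀ n, ∑ k ∈ range n, a k ≤ c * n + C) (n : ℕ) :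
    ∑ k ∈ range n, a k / (k+1) ≤ c * Real.log (n+1) + c + 2*C := by
  have hb : ∀ k : ℕ, a k / (k+1) = a k * (fun k : ℕ => 1/((k:ℝ)+1)) k := by
    intro k; simp [div_eq_mul_inv, one_div]
  calc ∑ k ∈ range n, a k / (k+1)
      = ∑ k ∈ range n, a k * (fun k : ℕ => 1/((k:ℝ)+1)) k := by
        exact Finset.sum_congr rfl (fun k _ => hb k)
    _ = (∑ k ∈ range n, a k) * (1/((n:ℝ)+1))
        + ∑ k ∈ range n, (∑ j ∈ range (k+1), a j) * (1/((k:ℝ)+1) - 1/((k+1:ℕ)+1)) :=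
        abel_id a (fun k : ℕ => 1/((k:ℝ)+1)) n
    _ ≤ (c + C) + ∑ k ∈ range n, (c/(k+2) + C * (1/((k:ℝ)+1) - 1/((k:ℝ)+2))) := by
        gcongr with k hk
        · -- (∑ a)/(n+1) ≤ c + C
          have hn1 : (0:ℝ) < (n:ℝ)+1 := by positivity
          have h1 : (∑ k ∈ range n, a k) * (1/((n:ℝ)+1)) ≤ (c * n + C) * (1/((n:ℝ)+1)) := by
            apply mul_le_mul_of_nonneg_right (hA n) (by positivity)
          have h2 : (c * n + C) * (1/((n:ℝ)+1)) ≤ c + C := by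
            rw [mul_one_div, div_le_iff₀ hn1]
            nlinarith [Nat.cast_nonneg (α := ℝ) n]
          exact le_trans h1 h2
        · -- term bound
          have hAk := hA (k+1)
          have hpos : (0:ℝ) < (k:ℝ)+1 := by positivity
          have hpos2 : (0:ℝ) < (k:ℝ)+2 := by positivity
          have hdiff : (1/((k:ℝ)+1) - 1/((k+1:ℕ)+1)) = 1/(((k:ℝ)+1)*((k:ℝ)+2)) := by
            push_cast
            rw [div_sub_div _ _ (ne_of_gt hpos) (ne_of_gt (by positivity : (0:ℝ) < (k:ℝ)+1+1))]
            have e1 : (1 * ((k:ℝ) + 1 + 1) - ((k:ℝ) + 1) * 1) = 1 := by ring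
            have e2 : (((k:ℝ) + 1) * ((k:ℝ) + 1 + 1)) = ((k:ℝ)+1) * ((k:ℝ)+2) := by ring
            rw [e1, e2]
          rw [hdiff]
          have hnn : (0:ℝ) ≤ 1/(((k:ℝ)+1)*((k:ℝ)+2)) := by positivity
          calc (∑ j ∈ range (k+1), a j) * (1/(((k:ℝ)+1)*((k:ℝ)+2)))
              ≤ (c * (k+1) + C) * (1/(((k:ℝ)+1)*((k:ℝ)+2))) := by
                gcongr
                exact le_trans hAk (by push_cast; linarith)
            _ = c/(k+2) + C * (1/(((k:ℝ)+1)*((k:ℝ)+2))) := by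
                have hx : ((k:ℝ)+1) * (1/(((k:ℝ)+1)*((k:ℝ)+2))) = 1/((k:ℝ)+2) := by
                  field_simp
                rw [add_mul, mul_assoc, hx, mul_one_div]
            _ ≤ c/(k+2) + C * (1/((k:ℝ)+1) - 1/((k:ℝ)+2)) := by
                have : 1/(((k:ℝ)+1)*((k:ℝ)+2)) = 1/((k:ℝ)+1) - 1/((k:ℝ)+2) := by
                  field_simp; ring
                rw [this]
    _ ≤ (c + C) + (c * Real.log (n+1) + C) := by
        rw [Finset.sum_add_distrib]
        gcongr
        · calc ∑ k ∈ range n, c/((k:ℝ)+2) = c * ∑ k ∈ range n, 1/((k:ℝ)+2) := by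
                rw [Finset.mul_sum]; exact Finset.sum_congr rfl (fun k _ => by ring)
          _ ≤ c * Real.log (n+1) := by
                have := sum_one_div_le_log n
                exact mul_le_mul_of_nonneg_left this hc
        · calc ∑ k ∈ range n, C * (1/((k:ℝ)+1) - 1/((k:ℝ)+2))
              = C * ∑ k ∈ range n, ((fun j : ℕ => -(1/((j:ℝ)+1))) (k+1) - (fun j : ℕ => -(1/((j:ℝ)+1))) k) := by
                rw [Finset.mul_sum]
                refine Finset.sum_congr rfl (fun k _ => ?_)
                push_cast; ring
            _ = C * (-(1/((n:ℝ)+1)) - -(1/((0:ℝ)+1))) := by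
                rw [Finset.sum_range_sub (f := fun j : ℕ => -(1/((j:ℝ)+1)))]
                norm_num
            _ ≤ C := by
                have h1 : (0:ℝ) ≤ 1/((n:ℝ)+1) := by positivity
                nlinarith
    _ ≤ c * Real.log (n+1) + c + 2*C := by linarith

/-- Lower bound: partial sums `≥ c n − C` implies
`∑ a_k/(k+m+1) ≥ c (log n − log (m+1) − 1) − C`. -/
lemma le_sum_div (a : ℕ → ℝ) (ha : ∀ k, 0 ≤ a k) (c C : ℝ) (hc : 0 ≤ c) (hC : 0 ≤ C)
    (m : ℕ) (hA : ∀ n, c * n - C ≤ ∑ k ∈ range n, a k) (n : ℕ) :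
    c * (Real.log n - Real.log (m+1) - 1) - C ≤ ∑ k ∈ range n, a k / (k+m+1) := by
  set b : ℕ → ℝ := fun k => 1/((k:ℝ)+m+1) with hbdef
  have hbpos : ∀ k : ℕ, 0 < b k := fun k => by positivity
  have hbanti : ∀ k : ℕ, b (k+1) ≤ b k := by
    intro k
    apply one_div_le_one_div_of_le (by positivity)
    push_cast; linarith
  have heq : ∑ k ∈ range n, a k / (k+m+1) = ∑ k ∈ range n, a k * b k := by
    refine Finset.sum_congr rfl (fun k _ => ?_)
    rw [hbdef]; simp [div_eq_mul_inv]
  rw [heq, abel_id a b n]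
  -- lower bound each piece
  have h1 : 0 ≤ (∑ k ∈ range n, a k) * b n := by
    apply mul_nonneg (Finset.sum_nonneg (fun k _ => ha k)) (hbpos n).le
  have h2 : ∑ k ∈ range n, (c * (k+1) - C) * (b k - b (k+1))
      ≤ ∑ k ∈ range n, (∑ j ∈ range (k+1), a j) * (b k - b (k+1)) := by
    refine Finset.sum_le_sum (fun k _ => ?_)
    have hd : 0 ≤ b k - b (k+1) := by linarith [hbanti k]
    apply mul_le_mul_of_nonneg_right _ hd
    have := hA (k+1)
    push_cast at this ⊢
    linarith
  have h3 : ∑ k ∈ range n, (c * (k+1) - C) * (b k - b (k+1))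
      = c * ∑ k ∈ range n, ((k:ℝ)+1) * (b k - b (k+1)) - C * (b 0 - b n) := by
    have : ∑ k ∈ range n, (c * (k+1) - C) * (b k - b (k+1))
        = ∑ k ∈ range n, (c * (((k:ℝ)+1) * (b k - b (k+1))) - C * (b k - b (k+1))) := by
      refine Finset.sum_congr rfl (fun k _ => ?_); ring
    rw [this, Finset.sum_sub_distrib, ← Finset.mul_sum, ← Finset.mul_sum]
    congr 1
    congr 1
    have := Finset.sum_range_sub' (f := b) n
    simpa using this
  -- ∑ (k+1)(b k − b (k+1)) = ∑ b k − n * b n  (via abel_id with a ≡ 1)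
  have h4 : ∀ n : ℕ, ∑ k ∈ range n, ((k:ℝ)+1) * (b k - b (k+1)) = (∑ k ∈ range n, b k) - n * b n := by
    intro n
    induction n with
    | zero => simp
    | succ n ih =>
      rw [Finset.sum_range_succ, ih, Finset.sum_range_succ (f := b)]
      push_cast; ring
  have h4 := h4 n
  have h5 : Real.log n - Real.log (m+1) ≤ ∑ k ∈ range n, b k := by
    have := log_le_sum_one_div n m
    have hlog : Real.log n ≤ Real.log (n+m+1) := by
      rcases Nat.eq_zero_or_pos n with h0 | hpos
      · subst h0
        simp only [Nat.cast_zero, Real.log_zero]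
        exact Real.log_nonneg (by push_cast; linarith)
      · apply Real.log_le_log (by positivity)
        push_cast; linarith
    have heqb : ∑ k ∈ range n, (1:ℝ)/(k+m+1) = ∑ k ∈ range n, b k := by
      refine Finset.sum_congr rfl (fun k _ => ?_); rw [hbdef]
    linarith
  have h6 : (n:ℝ) * b n ≤ 1 := by
    rw [hbdef]
    rcases Nat.eq_zero_or_pos n with h0 | hpos
    · subst h0; simp
    · have : (0:ℝ) < (n:ℝ)+m+1 := by positivity
      rw [mul_one_div, div_le_one this]
      push_cast; linarith
  have h7 : b 0 ≤ 1 := by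
    rw [hbdef]
    simp only [Nat.cast_zero, zero_add]
    rw [div_le_one (by positivity)]
    push_cast; linarith
  have h8 : b 0 - b n ≤ 1 := by linarith [hbpos n]
  calc c * (Real.log n - Real.log (m+1) - 1) - C
      ≤ c * ((∑ k ∈ range n, b k) - n * b n) - C * (b 0 - b n) := by
        have e1 : Real.log n - Real.log (m+1) - 1 ≤ (∑ k ∈ range n, b k) - n * b n := by
          linarith
        have e2 : C * (b 0 - b n) ≤ C := by nlinarith
        nlinarith [mul_le_mul_of_nonneg_left e1 hc]
    _ = ∑ k ∈ range n, (c * (k+1) - C) * (b k - b (k+1)) := by rw [h3, h4]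
    _ ≤ ∑ k ∈ range n, (∑ j ∈ range (k+1), a j) * (b k - b (k+1)) := h2
    _ ≤ (∑ k ∈ range n, a k) * b n
        + ∑ k ∈ range n, (∑ j ∈ range (k+1), a j) * (b k - b (k+1)) := by linarith

/-- From Cesàro convergence to linear two-sided bounds. -/
lemma linear_bounds (A : ℕ → ℝ) (L ε : ℝ) (hε : 0 < ε)
    (h : Tendsto (fun n => A n / n) atTop (𝓝 L)) :
    ∃ C, 0 ≤ C ∧ ∀ n : ℕ, A n ≤ (L+ε) * n + C ∧ (L-ε) * n - C ≤ A n := by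
  have hev : ∀ᶠ n : ℕ in atTop, |A n / n - L| < ε := by
    have h' : Tendsto (fun n : ℕ => |A n / n - L|) atTop (𝓝 0) := by
      have h2 := (h.sub_const L).abs
      simpa using h2
    exact h'.eventually_lt_const hε
  obtain ⟨N, hN⟩ := Filter.eventually_atTop.mp hev
  set C : ℝ := ∑ k ∈ range (N+1), (|A k| + (|L|+ε) * k) with hCdef
  have hterm : ∀ k, 0 ≤ |A k| + (|L|+ε) * k := by
    intro k; positivity
  have hCnn : 0 ≤ C := Finset.sum_nonneg (fun k _ => hterm k)
  refine ⟨C, hCnn, fun n => ?_⟩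
  rcases lt_or_ge n (N+1) with hn | hn
  · -- small n: use the constant
    have hmem : n ∈ range (N+1) := Finset.mem_range.mpr hn
    have hle : |A n| + (|L|+ε) * n ≤ C := by
      rw [hCdef]
      exact Finset.single_le_sum (fun k _ => hterm k) hmem
    have h1 : |A n| ≤ C := by nlinarith [abs_nonneg (A n), mul_nonneg (by positivity : (0:ℝ) ≤ |L|+ε) (Nat.cast_nonneg n)]
    constructor
    · have : A n ≤ |A n| := le_abs_self _
      have h2 : 0 ≤ (L+ε) * n + C - A n := by
        have hLn : -((|L|+ε) * n) ≤ (L+ε) * (n:ℝ) := by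
          have : -(|L|+ε) ≤ L+ε := by
            have := neg_abs_le L; linarith
          nlinarith [Nat.cast_nonneg (α := ℝ) n]
        have : -(|A n| + (|L|+ε) * n) ≤ A n + (L+ε) * n := by
          have := neg_abs_le (A n); nlinarith
        linarith
      linarith
    · have hLn : (L-ε) * (n:ℝ) ≤ (|L|+ε) * n := by
        have : L - ε ≤ |L| + ε := by have := le_abs_self L; linarith
        nlinarith [Nat.cast_nonneg (α := ℝ) n]
      have : -(|A n|) ≤ A n := neg_abs_le _
      nlinarith
  · -- large n
    have hn1 : 1 ≤ n := le_trans (Nat.le_add_left 1 N) hn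
    have hnpos : (0:ℝ) < n := by exact_mod_cast hn1
    have := hN n (le_trans (Nat.le_succ N) hn)
    rw [abs_lt] at this
    obtain ⟨hlo, hhi⟩ := this
    have e1 : A n / n < L + ε := by linarith
    have e2 : L - ε < A n / n := by linarith
    constructor
    · have := (div_lt_iff₀ hnpos).mp e1
      nlinarith
    · have := (lt_div_iff₀ hnpos).mp e2
      nlinarith

end SeqLemmas

section PathLemmas
open Finset

/-- The Yule embedded chain just counts. -/
lemma chainOf_succ_eq (x : ℕ) (U : ℕ → Ω → ℝ) (n : ℕ) (ω : Ω) :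
    chainOf (S := ℕ) (fun s _ => s + 1) x U n ω = x + n := by
  induction n with
  | zero => rfl
  | succ n ih =>
    show (chainOf _ x U n ω) + 1 = x + (n+1)
    rw [ih]
    omega

lemma yule_eq (μ : ℝ) (x : ℕ) (E : ℕ → Ω → ℝ) (t : ℝ) (ω : Ω) :
    yule μ x E t ω
      = x + Nat.card {n : ℕ | jumpT (fun s : ℕ => μ * s) (fun s _ => s + 1) x E
          (fun _ _ => 0) (n + 1) ω ≤ t} := by
  rw [yule, jumpProc, chainOf_succ_eq]

/-- yule from 1 individual is at least 1. -/
lemma one_le_yule (μ : ℝ) (E : ℕ → Ω → ℝ) (t : ℝ) (ω : Ω) : 1 ≤ yule μ 1 E t ω := by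
  rw [yule_eq]; omega

/-- jump times are monotone when holding times are nonnegative and rates positive. -/
lemma jumpT_mono {R : S → ℝ} {next : S → ℝ → S} {x : S} {E U : ℕ → Ω → ℝ} {ω : Ω}
    (hE : ∀ n, 0 ≤ E n ω) (hR : ∀ n, 0 < R (chainOf next x U n ω)) :
    Monotone (fun n => jumpT R next x E U n ω) := by
  apply monotone_nat_of_le_succ
  intro n
  show jumpT R next x E U n ω ≤ jumpT R next x E U n ω + E n ω / R (chainOf next x U n ω)
  have : 0 ≤ E n ω / R (chainOf next x U n ω) := div_nonneg (hE n) (hR n).le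
  linarith

lemma jumpT_nonneg {R : S → ℝ} {next : S → ℝ → S} {x : S} {E U : ℕ → Ω → ℝ} {ω : Ω}
    (hE : ∀ n, 0 ≤ E n ω) (hR : ∀ n, 0 < R (chainOf next x U n ω)) (n : ℕ) :
    0 ≤ jumpT R next x E U n ω := by
  have h0 : jumpT R next x E U 0 ω = 0 := rfl
  have := jumpT_mono hE hR (Nat.zero_le n)
  simpa [h0] using this

/-- Positivity of the birth-death total rate. -/
lemma bdR_pos {μ ν : ℝ} (hμ : 0 < μ) (hν : 0 ≤ ν) (s : ℕ) : 0 < bdR μ ν s := by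
  rw [bdR]
  have h1 : (1:ℝ) ≤ max (s:ℝ) 1 := le_max_right _ _
  have hs : (0:ℝ) ≤ (s:ℕ) := Nat.cast_nonneg s
  have hcast : ((max s 1 : ℕ) : ℝ) = max (s:ℝ) 1 := by push_cast; rfl
  nlinarith [mul_nonneg hν hs]

/-- The chain of the birth-death process grows at most by one. -/
lemma bdChain_le (μ ν : ℝ) (z : ℕ) (U : ℕ → Ω → ℝ) (n : ℕ) (ω : Ω) :
    bdChain μ ν z U n ω ≤ z + n := by
  induction n with
  | zero => exact le_refl z
  | succ n ih =>
    show bdNext μ ν (bdChain μ ν z U n ω) (U n ω) ≤ z + (n+1)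
    rw [bdNext]
    split <;> omega

/-- A step is up if the uniform is at most `μ/(μ+ν)`. -/
lemma bdNext_up {μ ν : ℝ} (hμ : 0 < μ) (hν : 0 < ν) {u : ℝ} (hu : 0 < u) (hu1 : u ≤ 1)
    (hup : u ≤ μ/(μ+ν)) (s : ℕ) : bdNext μ ν s u = s + 1 := by
  rw [bdNext, if_pos]
  rcases Nat.eq_zero_or_pos s with h0 | hpos
  · subst h0
    simp only [Nat.cast_zero, bdR, mul_zero, add_zero]
    have : (max (0:ℕ) 1 : ℕ) = 1 := rfl
    rw [this]
    push_cast
    nlinarith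
  · have hmax : (max s 1 : ℕ) = s := by omega
    rw [bdR, hmax]
    have hs : (0:ℝ) < (s:ℝ) := by exact_mod_cast hpos
    have key : u * (μ + ν) ≤ μ := by
      rw [div_eq_mul_inv] at hup
      have hpos2 : (0:ℝ) < μ + ν := by linarith
      calc u * (μ+ν) ≤ (μ * (μ+ν)⁻¹) * (μ+ν) := by nlinarith
        _ = μ := by field_simp
    calc u * ((μ * s) + ν * s) = (u * (μ + ν)) * s := by ring
      _ ≤ μ * s := by nlinarith

/-- Any step decreases by at most one (in `ℤ`). -/
lemma bdNext_ge (μ ν : ℝ) (s : ℕ) (u : ℝ) : (s:ℤ) - 1 ≤ (bdNext μ ν s u : ℤ) := by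
  rw [bdNext]; split <;> push_cast <;> omega

/-- The birth-death chain dominates the i.i.d. ±1 walk. -/
lemma walk_le_bdChain {μ ν : ℝ} (hμ : 0 < μ) (hν : 0 < ν) (z : ℕ) {U : ℕ → Ω → ℝ} {ω : Ω}
    (hU : ∀ n, U n ω ∈ Set.Ioc (0:ℝ) 1) (n : ℕ) :
    ∑ k ∈ range n, (if U k ω ≤ μ/(μ+ν) then (1:ℤ) else -1) ≤ (bdChain μ ν z U n ω : ℤ) := by
  induction n with
  | zero => simp
  | succ n ih =>
    rw [Finset.sum_range_succ]
    have hstep : bdChain μ ν z U (n+1) ω = bdNext μ ν (bdChain μ ν z U n ω) (U n ω) := rfl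
    by_cases h : U n ω ≤ μ/(μ+ν)
    · rw [if_pos h, hstep, bdNext_up hμ hν (hU n).1 (hU n).2 h]
      push_cast; omega
    · rw [if_neg h, hstep]
      have := bdNext_ge μ ν (bdChain μ ν z U n ω) (U n ω)
      omega

/-- A uniform below `μ/(μ+ν)` gives a recorded birth. -/
lemma bdUp_of_le {μ ν : ℝ} (hμ : 0 < μ) (hν : 0 < ν) (z : ℕ) {U : ℕ → Ω → ℝ} {ω : Ω}
    (hU : ∀ n, U n ω ∈ Set.Ioc (0:ℝ) 1) {n : ℕ} (h : U n ω ≤ μ/(μ+ν)) :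
    bdUp μ ν z U n ω := by
  show bdChain μ ν z U (n+1) ω = bdChain μ ν z U n ω + 1
  show bdNext μ ν (bdChain μ ν z U n ω) (U n ω) = _
  exact bdNext_up hμ hν (hU n).1 (hU n).2 h _

end PathLemmas

section Assembly
open Finset Topology

lemma jumpT_eq_sum {S : Type*} {R : S → ℝ} {next : S → ℝ → S} {x : S} {E U : ℕ → Ω → ℝ}
    (ω : Ω) (n : ℕ) :
    jumpT R next x E U n ω = ∑ k ∈ range n, E k ω / R (chainOf next x U k ω) := by
  induction n with
  | zero => rfl
  | succ n ih =>
    rw [Finset.sum_range_succ, ← ih]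
    rfl

lemma card_setOf_le {P : ℕ → Prop} {M : ℕ} (h : ∀ n, P n → n < M) :
    Nat.card {n | P n} ≤ M := by
  have hsub : {n | P n} ⊆ Set.Iio M := fun n hn => h n hn
  calc Nat.card {n | P n} = Set.ncard {n | P n} := Nat.card_coe_set_eq _
    _ ≤ Set.ncard (Set.Iio M) := Set.ncard_le_ncard hsub (Set.finite_Iio M)
    _ = M := by
      rw [← Nat.card_coe_set_eq]
      simp [Nat.card_eq_fintype_card]

variable {μW μZ ν : ℝ} {w z : ℕ} {EY EZ UZ : ℕ → Ω → ℝ} {ω : Ω}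

set_option maxHeartbeats 1000000 in
/-- Upper bound for the jump times of the birth-death process. -/
lemma bdTimes_upper (hμZ : 0 < μZ) (hν : 0 < ν) (hlam : 0 < μZ - ν) (z : ℕ)
    (hEZ0 : ∀ n, 0 ≤ EZ n ω) (hU : ∀ n, UZ n ω ∈ Set.Ioc (0:ℝ) 1)
    (hEZs : Tendsto (fun n => (∑ k ∈ range n, EZ k ω)/n) atTop (𝓝 1))
    (hUs : Tendsto (fun n => (∑ k ∈ range n,
        (if UZ k ω ≤ μZ/(μZ+ν) then (1:ℝ) else 0))/n) atTop (𝓝 (μZ/(μZ+ν))))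
    {c : ℝ} (hc : 1/(μZ-ν) < c) :
    ∃ C, ∀ n : ℕ, 1 ≤ n → bdTimes μZ ν z EZ UZ n ω ≤ C + c * Real.log n := by
  have hμν : (0:ℝ) < μZ + ν := by linarith
  set δ : ℝ := (μZ - ν)/(μZ + ν) with hδdef
  have hδ : 0 < δ := by positivity
  set p : ℝ := μZ/(μZ+ν) with hpdef
  -- the walk and its LLN
  set Wk : ℕ → ℝ := fun n => ∑ k ∈ range n, (if UZ k ω ≤ p then (1:ℝ) else -1) with hWkdef
  have hWkEq : ∀ n, Wk n = 2 * (∑ k ∈ range n, (if UZ k ω ≤ p then (1:ℝ) else 0)) - n := by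
    intro n
    rw [hWkdef]
    simp only
    induction n with
    | zero => simp
    | succ n ih =>
      rw [Finset.sum_range_succ, Finset.sum_range_succ, ih]
      push_cast
      split <;> ring
  have hWks : Tendsto (fun n => Wk n / n) atTop (𝓝 δ) := by
    have h2 : Tendsto (fun n : ℕ => 2 * ((∑ k ∈ range n, (if UZ k ω ≤ p then (1:ℝ) else 0))/n) - 1)
        atTop (𝓝 (2 * p - 1)) := by
      exact ((hUs.const_mul 2).sub_const 1)
    have hval : 2 * p - 1 = δ := by
      rw [hpdef, hδdef]; field_simp; ring
    rw [hval] at h2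
    apply h2.congr'
    filter_upwards [Filter.eventually_ge_atTop 1] with n hn
    have hn0 : (n:ℝ) ≠ 0 := by
      have : (1:ℝ) ≤ (n:ℝ) := by exact_mod_cast hn
      linarith
    rw [hWkEq n]
    field_simp
  -- LLN bounds
  -- choose ε
  obtain ⟨ε, hεpos, hεδ, hεkey⟩ : ∃ ε : ℝ, 0 < ε ∧ ε < δ/4 ∧
      (1+ε)^2 < c * ((μZ+ν)*δ - 2*(μZ+ν)*ε) := by
    have hf : Continuous (fun ε : ℝ => c * ((μZ+ν)*δ - 2*(μZ+ν)*ε) - (1+ε)^2) := by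
      continuity
    have hf0 : (0:ℝ) < c * ((μZ+ν)*δ - 2*(μZ+ν)*0) - (1+0)^2 := by
      have hdl : (μZ+ν)*δ = μZ - ν := by rw [hδdef]; field_simp
      rw [hdl]
      have h1 : 1 < c * (μZ - ν) := by
        rw [div_lt_iff₀ hlam] at hc
        linarith [hc]
      norm_num
      linarith
    have h1 : ∀ᶠ ε in 𝓝 (0:ℝ), 0 < c * ((μZ+ν)*δ - 2*(μZ+ν)*ε) - (1+ε)^2 :=
      (hf.tendsto 0).eventually_const_lt hf0
    have h2 : ∀ᶠ ε in 𝓝 (0:ℝ), |ε - 0| < δ/4 := eventually_abs_sub_lt 0 (by positivity)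
    have h3 : ∀ᶠ ε in 𝓝[>] (0:ℝ), (0 < c * ((μZ+ν)*δ - 2*(μZ+ν)*ε) - (1+ε)^2 ∧ |ε - 0| < δ/4) :=
      ((h1.and h2).filter_mono nhdsWithin_le_nhds)
    obtain ⟨ε, hε1, hε2⟩ := (h3.and self_mem_nhdsWithin).exists
    have hεpos : 0 < ε := Set.mem_Ioi.mp hε2
    have habs := hε1.2
    rw [sub_zero, abs_of_pos hεpos] at habs
    exact ⟨ε, hεpos, habs, by linarith [hε1.1]⟩
  obtain ⟨C₁, hC₁0, hC₁⟩ := linear_bounds Wk δ ε hεpos hWks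
  obtain ⟨C₂, hC₂0, hC₂⟩ := linear_bounds (fun n => ∑ k ∈ range n, EZ k ω) 1 ε hεpos hEZs
  -- choose K
  obtain ⟨K, hK1, hKε, hKC⟩ : ∃ K : ℕ, 1 ≤ K ∧ 1 ≤ ε * K ∧ C₁ ≤ ε * K := by
    obtain ⟨K, hK⟩ := exists_nat_gt (max (1/ε) (C₁/ε) + 1)
    refine ⟨K, ?_, ?_, ?_⟩
    · have h1 : (0:ℝ) ≤ max (1/ε) (C₁/ε) := le_trans (by positivity) (le_max_left _ _)
      have : (1:ℝ) ≤ K := by linarith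
      exact_mod_cast this
    · have h1 : 1/ε ≤ max (1/ε) (C₁/ε) := le_max_left _ _
      have h2 : 1/ε < K := by linarith
      rw [div_lt_iff₀ hεpos] at h2
      linarith [h2]
    · have h1 : C₁/ε ≤ max (1/ε) (C₁/ε) := le_max_right _ _
      have h2 : C₁/ε < K := by linarith
      rw [div_lt_iff₀ hεpos] at h2
      linarith [h2]
  -- chain lower bound for k ≥ K
  have hchain : ∀ k : ℕ, K ≤ k → (δ - 2*ε) * k ≤ (bdChain μZ ν z UZ k ω : ℝ) := by
    intro k hk
    have hwalk := walk_le_bdChain hμZ hν z hU k (ω := ω)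
    have hcast : Wk k ≤ (bdChain μZ ν z UZ k ω : ℝ) := by
      rw [hWkdef]
      have : ∀ j, (if UZ j ω ≤ p then (1:ℝ) else -1)
          = (((if UZ j ω ≤ p then (1:ℤ) else -1) : ℤ) : ℝ) := by
        intro j; split <;> simp
      simp only
      rw [Finset.sum_congr rfl (fun j _ => this j), ← Int.cast_sum]
      exact_mod_cast hwalk
    have hlow := (hC₁ k).2
    have hKk : (K:ℝ) ≤ k := by exact_mod_cast hk
    have hεk : C₁ ≤ ε * k := by
      have h1 : ε * K ≤ ε * k := mul_le_mul_of_nonneg_left hKk hεpos.le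
      linarith
    linarith
  -- rate lower bound for k ≥ K
  have hrate : ∀ k : ℕ, K ≤ k →
      (μZ+ν) * ((δ - 2*ε) / (1+ε)) * (k+1) ≤ bdR μZ ν (bdChain μZ ν z UZ k ω) := by
    intro k hk
    have hZk := hchain k hk
    set Zk := bdChain μZ ν z UZ k ω
    have hRge : (μZ+ν) * (Zk:ℝ) ≤ bdR μZ ν Zk := by
      rw [bdR]
      have hmax : (Zk:ℝ) ≤ ((max Zk 1 : ℕ):ℝ) := by exact_mod_cast le_max_left _ _
      have h1 : μZ * (Zk:ℝ) ≤ μZ * ((max Zk 1 : ℕ):ℝ) :=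
        mul_le_mul_of_nonneg_left hmax hμZ.le
      linarith
    have hKk : (K:ℝ) ≤ k := by exact_mod_cast hk
    have hk1 : (1:ℝ) ≤ ε * k := by
      have h1 : ε * K ≤ ε * k := mul_le_mul_of_nonneg_left hKk hεpos.le
      linarith
    have hδ2ε : 0 < δ - 2*ε := by linarith [hεδ]
    have hfrac : ((δ - 2*ε) / (1+ε)) * ((k:ℝ)+1) ≤ (δ - 2*ε) * k := by
      rw [div_mul_eq_mul_div, div_le_iff₀ (by linarith : (0:ℝ) < 1+ε)]
      have h2 : 0 ≤ (δ - 2*ε) * (ε * k - 1) :=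
        mul_nonneg hδ2ε.le (by linarith)
      nlinarith [h2]
    calc (μZ+ν) * ((δ - 2*ε) / (1+ε)) * ((k:ℝ)+1)
        = (μZ+ν) * (((δ - 2*ε) / (1+ε)) * ((k:ℝ)+1)) := by ring
      _ ≤ (μZ+ν) * ((δ - 2*ε) * k) := mul_le_mul_of_nonneg_left hfrac hμν.le
      _ ≤ (μZ+ν) * (Zk:ℝ) := mul_le_mul_of_nonneg_left hZk hμν.le
      _ ≤ bdR μZ ν Zk := hRge
  -- T n ≤ T K + weighted sum
  set c₀ : ℝ := (μZ+ν) * ((δ - 2*ε) / (1+ε)) with hc₀def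
  have hc₀pos : 0 < c₀ := by
    rw [hc₀def]
    have hδ2ε : 0 < δ - 2*ε := by linarith [hεδ]
    positivity
  set a' : ℕ → ℝ := fun k => if k < K then 0 else EZ k ω with ha'def
  have ha'nn : ∀ k, 0 ≤ a' k := by
    intro k; rw [ha'def]; dsimp only; split
    · exact le_refl 0
    · exact hEZ0 k
  have hTle : ∀ n : ℕ, bdTimes μZ ν z EZ UZ n ω
      ≤ bdTimes μZ ν z EZ UZ K ω + (1/c₀) * ∑ k ∈ range n, a' k / (k+1) := by
    intro n
    induction n with
    | zero =>
      simp only [Finset.range_zero, Finset.sum_empty, mul_zero, add_zero]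
      exact jumpT_nonneg (R := bdR μZ ν) (next := bdNext μZ ν) (x := z) (U := UZ)
        hEZ0 (fun n => bdR_pos hμZ hν.le _) K
    | succ n ih =>
      have hsum_mono : ∑ k ∈ range n, a' k / (k+1) ≤ ∑ k ∈ range (n+1), a' k / (k+1) := by
        rw [Finset.sum_range_succ]
        have : 0 ≤ a' n / (n+1) := div_nonneg (ha'nn n) (by positivity)
        linarith
      rcases lt_or_ge n K with hn | hn
      · -- n+1 ≤ K : use monotonicity
        have hmono := jumpT_mono (R := bdR μZ ν) (next := bdNext μZ ν) (x := z) (U := UZ)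
          hEZ0 (fun m => bdR_pos hμZ hν.le _) (show n+1 ≤ K from hn)
        have hnn : 0 ≤ (1/c₀) * ∑ k ∈ range (n+1), a' k / (k+1) := by
          apply mul_nonneg (by positivity)
          exact Finset.sum_nonneg (fun k _ => div_nonneg (ha'nn k) (by positivity))
        calc bdTimes μZ ν z EZ UZ (n+1) ω ≤ bdTimes μZ ν z EZ UZ K ω := hmono
          _ ≤ _ := by linarith
      · -- n ≥ K : bound the increment
        have hstep : bdTimes μZ ν z EZ UZ (n+1) ω
            = bdTimes μZ ν z EZ UZ n ω + EZ n ω / bdR μZ ν (bdChain μZ ν z UZ n ω) := rfl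
        have hrn := hrate n hn
        have hRpos := bdR_pos hμZ hν.le (bdChain μZ ν z UZ n ω)
        have hincr : EZ n ω / bdR μZ ν (bdChain μZ ν z UZ n ω)
            ≤ (1/c₀) * (a' n / (n+1)) := by
          have ha'n : a' n = EZ n ω := by rw [ha'def]; simp [Nat.not_lt.mpr hn]
          rw [ha'n]
          have hc₀n : c₀ * ((n:ℝ)+1) ≤ bdR μZ ν (bdChain μZ ν z UZ n ω) := hrn
          have hpos : (0:ℝ) < c₀ * ((n:ℝ)+1) := by positivity
          have h1d : 1 / bdR μZ ν (bdChain μZ ν z UZ n ω) ≤ 1 / (c₀ * ((n:ℝ)+1)) :=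
            one_div_le_one_div_of_le hpos hc₀n
          calc EZ n ω / bdR μZ ν (bdChain μZ ν z UZ n ω)
              = EZ n ω * (1 / bdR μZ ν (bdChain μZ ν z UZ n ω)) := by
                rw [mul_one_div, div_eq_div_iff hRpos.ne' hRpos.ne']
            _ ≤ EZ n ω * (1 / (c₀ * ((n:ℝ)+1))) := mul_le_mul_of_nonneg_left h1d (hEZ0 n)
            _ = (1/c₀) * (EZ n ω / ((n:ℝ)+1)) := by
                field_simp
        rw [hstep, Finset.sum_range_succ, mul_add]
        linarith
  -- bound the weighted sum
  have hA' : ∀ n, ∑ k ∈ range n, a' k ≤ (1+ε) * n + C₂ := by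
    intro n
    have h1 : ∑ k ∈ range n, a' k ≤ ∑ k ∈ range n, EZ k ω := by
      apply Finset.sum_le_sum
      intro k _
      rw [ha'def]; dsimp only; split
      · exact hEZ0 k
      · exact le_refl _
    exact le_trans h1 (hC₂ n).1
  have hsumlog' := fun n => sum_div_succ_le a' ha'nn (1+ε) C₂ (by linarith) hC₂0 hA' n
  -- conclude
  refine ⟨bdTimes μZ ν z EZ UZ K ω + (1/c₀) * ((1+ε) * Real.log 2 + (1+ε) + 2*C₂), ?_⟩
  intro n hn
  have hT := hTle n
  have hsumlog := hsumlog' n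
  have hlog : Real.log (n+1) ≤ Real.log 2 + Real.log n := by
    have h2n : ((n:ℝ)+1) ≤ 2 * n := by
      have : (1:ℝ) ≤ n := by exact_mod_cast hn
      linarith
    calc Real.log ((n:ℝ)+1) ≤ Real.log (2*n) := by
          apply Real.log_le_log (by positivity) h2n
      _ = Real.log 2 + Real.log n := by
          rw [Real.log_mul (by norm_num) (by positivity : (n:ℝ) ≠ 0)]
  have hδ2ε : 0 < δ - 2*ε := by linarith
  have hcoef : (1+ε)/c₀ ≤ c := by
    rw [div_le_iff₀ hc₀pos, hc₀def]
    rw [show c * ((μZ+ν) * ((δ - 2*ε)/(1+ε))) = (c * ((μZ+ν) * (δ - 2*ε)))/(1+ε) from by ring]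
    rw [le_div_iff₀ (by linarith : (0:ℝ) < 1+ε)]
    nlinarith [hεkey]
  have hfin : bdTimes μZ ν z EZ UZ n ω
      ≤ (bdTimes μZ ν z EZ UZ K ω + (1/c₀) * ((1+ε) * Real.log 2 + (1+ε) + 2*C₂))
        + ((1+ε)/c₀) * Real.log n := by
    have hs := hsumlog
    have h2 : (1/c₀) * (∑ k ∈ range n, a' k / (k+1))
        ≤ (1/c₀) * ((1+ε) * Real.log (n+1) + (1+ε) + 2*C₂) :=
      mul_le_mul_of_nonneg_left hs (by positivity)
    have h3 : (1+ε) * Real.log ((n:ℝ)+1) ≤ (1+ε) * (Real.log 2 + Real.log n) :=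
      mul_le_mul_of_nonneg_left hlog (by linarith)
    have h4 : (1/c₀) * ((1+ε) * Real.log ((n:ℝ)+1) + (1+ε) + 2*C₂)
        ≤ (1/c₀) * ((1+ε) * (Real.log 2 + Real.log n) + (1+ε) + 2*C₂) := by
      apply mul_le_mul_of_nonneg_left _ (by positivity)
      linarith
    have h5 : (1/c₀) * ((1+ε) * (Real.log 2 + Real.log n) + (1+ε) + 2*C₂)
        = (1/c₀) * ((1+ε) * Real.log 2 + (1+ε) + 2*C₂) + ((1+ε)/c₀) * Real.log n := by
      ring
    linarith
  have hlogn : 0 ≤ Real.log n := by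
    apply Real.log_nonneg
    exact_mod_cast hn
  have h6 : ((1+ε)/c₀) * Real.log n ≤ c * Real.log n :=
    mul_le_mul_of_nonneg_right hcoef hlogn
  linarith

end Assembly

section Assembly2
open Finset Topology

variable {μW μZ ν : ℝ} {w z : ℕ} {EY EZ UZ : ℕ → Ω → ℝ} {ω : Ω}

/-- The birth-death process does not explode: jump times tend to infinity. -/
lemma bdTimes_atTop (hμZ : 0 < μZ) (hν : 0 < ν) (z : ℕ)
    (hEZ0 : ∀ n, 0 ≤ EZ n ω)
    (hEZs : Tendsto (fun n => (∑ k ∈ range n, EZ k ω)/n) atTop (𝓝 1)) :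
    Tendsto (fun n => bdTimes μZ ν z EZ UZ n ω) atTop atTop := by
  have hμν : (0:ℝ) < μZ + ν := by linarith
  obtain ⟨C, hC0, hC⟩ := linear_bounds (fun n => ∑ k ∈ range n, EZ k ω) 1 (1/2) (by norm_num) hEZs
  -- lower bound for T n
  have hTge : ∀ n : ℕ, (1/(μZ+ν)) * ((1/2) * (Real.log n - Real.log (z+1) - 1) - C)
      ≤ bdTimes μZ ν z EZ UZ n ω := by
    intro n
    have hTsum : bdTimes μZ ν z EZ UZ n ω
        = ∑ k ∈ range n, EZ k ω / bdR μZ ν (bdChain μZ ν z UZ k ω) := by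
      exact jumpT_eq_sum (R := bdR μZ ν) (next := bdNext μZ ν) (x := z) (U := UZ) ω n
    have hterm : ∀ k : ℕ, (1/(μZ+ν)) * (EZ k ω / ((k:ℝ) + z + 1))
        ≤ EZ k ω / bdR μZ ν (bdChain μZ ν z UZ k ω) := by
      intro k
      have hZk : (bdChain μZ ν z UZ k ω : ℕ) ≤ z + k := bdChain_le μZ ν z UZ k ω
      have hRle : bdR μZ ν (bdChain μZ ν z UZ k ω) ≤ (μZ+ν) * ((k:ℝ) + z + 1) := by
        rw [bdR]
        have h1 : ((max (bdChain μZ ν z UZ k ω) 1 : ℕ) : ℝ) ≤ (k:ℝ) + z + 1 := by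
          have : max (bdChain μZ ν z UZ k ω) 1 ≤ k + z + 1 := by omega
          exact_mod_cast this
        have h2 : ((bdChain μZ ν z UZ k ω : ℕ) : ℝ) ≤ (k:ℝ) + z + 1 := by
          have : (bdChain μZ ν z UZ k ω : ℕ) ≤ k + z + 1 := by omega
          exact_mod_cast this
        nlinarith
      have hRpos := bdR_pos hμZ hν.le (bdChain μZ ν z UZ k ω)
      have hdenpos : (0:ℝ) < (μZ+ν) * ((k:ℝ) + z + 1) := by positivity
      have h1d : 1 / ((μZ+ν) * ((k:ℝ) + z + 1)) ≤ 1 / bdR μZ ν (bdChain μZ ν z UZ k ω) :=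
        one_div_le_one_div_of_le hRpos hRle
      calc (1/(μZ+ν)) * (EZ k ω / ((k:ℝ) + z + 1))
          = EZ k ω * (1 / ((μZ+ν) * ((k:ℝ) + z + 1))) := by
            field_simp
        _ ≤ EZ k ω * (1 / bdR μZ ν (bdChain μZ ν z UZ k ω)) :=
            mul_le_mul_of_nonneg_left h1d (hEZ0 k)
        _ = EZ k ω / bdR μZ ν (bdChain μZ ν z UZ k ω) := by
            rw [mul_one_div]
    have hsum : ∑ k ∈ range n, (1/(μZ+ν)) * (EZ k ω / ((k:ℝ) + z + 1))
        ≤ bdTimes μZ ν z EZ UZ n ω := by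
      rw [hTsum]
      exact Finset.sum_le_sum (fun k _ => hterm k)
    have hlow := le_sum_div (fun k => EZ k ω) hEZ0 (1/2) C (by norm_num) hC0 z
      (fun m => by
        have := (hC m).2
        norm_num at this ⊢
        convert this using 2) n
    have heq : ∑ k ∈ range n, (1/(μZ+ν)) * (EZ k ω / ((k:ℝ) + z + 1))
        = (1/(μZ+ν)) * ∑ k ∈ range n, EZ k ω / ((k:ℝ) + z + 1) := by
      rw [Finset.mul_sum]
    have h2 : (1/(μZ+ν)) * ((1/2) * (Real.log n - Real.log (z+1) - 1) - C)
        ≤ (1/(μZ+ν)) * ∑ k ∈ range n, EZ k ω / ((k:ℝ) + z + 1) := by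
      apply mul_le_mul_of_nonneg_left _ (by positivity)
      exact hlow
    rw [heq] at hsum
    linarith
  -- conclude divergence
  apply tendsto_atTop_mono' atTop ?_ ?_
  · exact fun n => (1/(μZ+ν)) * ((1/2) * (Real.log n - Real.log (z+1) - 1) - C)
  · filter_upwards with n using hTge n
  · apply Tendsto.const_mul_atTop (by positivity : (0:ℝ) < 1/(μZ+ν))
    apply tendsto_atTop_add_const_right
    apply Tendsto.const_mul_atTop (by norm_num : (0:ℝ) < 1/2)
    apply tendsto_atTop_add_const_right
    apply tendsto_atTop_add_const_right
    exact Real.tendsto_log_atTop.comp tendsto_natCast_atTop_atTop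

set_option maxHeartbeats 1000000 in
/-- Exponential upper bound on the Yule process along a good path. -/
lemma yule_upper (hμW : 0 < μW) (hw : 1 ≤ w)
    (hEY0 : ∀ n, 0 ≤ EY n ω)
    (hEYs : Tendsto (fun n => (∑ k ∈ range n, EY k ω)/n) atTop (𝓝 1))
    {c : ℝ} (hc : μW < c) :
    ∃ D : ℝ, 1 ≤ D ∧ ∀ t : ℝ, 0 ≤ t → (yule μW w EY t ω : ℝ) ≤ D * Real.exp (c * t) := by
  have hcpos : 0 < c := lt_trans hμW hc
  set ε : ℝ := 1 - μW/c with hεdef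
  have hεpos : 0 < ε := by
    rw [hεdef]
    have : μW/c < 1 := (div_lt_one hcpos).mpr hc
    linarith
  have h1ε : 1 - ε = μW/c := by rw [hεdef]; ring
  have hμWc : 0 < μW/c := by positivity
  obtain ⟨C, hC0, hC⟩ := linear_bounds (fun n => ∑ k ∈ range n, EY k ω) 1 ε hεpos hEYs
  -- lower bound on Yule jump times
  have hTge : ∀ n : ℕ, (1/c) * (Real.log n - Real.log w - 1) - C/μW
      ≤ jumpT (fun s : ℕ => μW * s) (fun s _ => s + 1) w EY (fun _ _ => 0) n ω := by
    intro n
    have hTsum := jumpT_eq_sum (R := fun s : ℕ => μW * s) (next := fun s _ => s + 1)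
      (x := w) (E := EY) (U := fun _ _ => 0) ω n
    have hchain : ∀ k : ℕ, chainOf (S := ℕ) (fun s _ => s + 1) w (fun _ _ => 0) k ω = w + k :=
      fun k => chainOf_succ_eq w _ k ω
    have hterm : ∀ k : ℕ, (1/μW) * (EY k ω / ((k:ℝ) + (w-1 : ℕ) + 1))
        = EY k ω / (μW * (chainOf (S := ℕ) (fun s _ => s + 1) w (fun _ _ => 0) k ω : ℕ)) := by
      intro k
      rw [hchain k]
      have hcast : (((w + k : ℕ)) : ℝ) = (k:ℝ) + ((w-1 : ℕ) : ℝ) + 1 := by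
        have : ((w-1:ℕ):ℝ) = (w:ℝ) - 1 := by
          have : (1:ℕ) ≤ w := hw
          push_cast [Nat.cast_sub this]
          ring
        rw [this]
        push_cast
        ring
      rw [hcast]
      have hX : ((k:ℝ) + ((w-1:ℕ):ℝ) + 1) ≠ 0 := by positivity
      field_simp
    have hlow := le_sum_div (fun k => EY k ω) hEY0 (1-ε) C (by rw [h1ε]; positivity) hC0 (w-1)
      (fun m => (hC m).2) n
    have heq : ∑ k ∈ range n, (1/μW) * (EY k ω / ((k:ℝ) + (w-1:ℕ) + 1))
        = jumpT (fun s : ℕ => μW * s) (fun s _ => s + 1) w EY (fun _ _ => 0) n ω := by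
      rw [hTsum]
      exact Finset.sum_congr rfl (fun k _ => hterm k)
    have h2 : (1/μW) * ((1-ε) * (Real.log n - Real.log ((w-1:ℕ)+1) - 1) - C)
        ≤ ∑ k ∈ range n, (1/μW) * (EY k ω / ((k:ℝ) + (w-1:ℕ) + 1)) := by
      rw [← Finset.mul_sum]
      apply mul_le_mul_of_nonneg_left hlow (by positivity)
    have hw1 : ((w-1:ℕ):ℝ) + 1 = (w:ℝ) := by
      have : (1:ℕ) ≤ w := hw
      push_cast [Nat.cast_sub this]
      ring
    rw [hw1] at h2
    have h3 : (1/μW) * ((1-ε) * (Real.log n - Real.log w - 1) - C)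
        = (1/c) * (Real.log n - Real.log w - 1) - C/μW := by
      rw [h1ε]
      field_simp
    rw [h3] at h2
    rw [← heq]
    exact h2
  -- count bound
  refine ⟨(w:ℝ) + Real.exp (Real.log w + 1 + c*C/μW) + 1, by
    have h1 := Real.exp_pos (Real.log w + 1 + c*C/μW)
    have h2 := Nat.cast_nonneg (α := ℝ) w
    linarith, fun t ht => ?_⟩
  set B : ℝ := Real.log w + 1 + c*C/μW with hBdef
  have hkey : ∀ n : ℕ,
      jumpT (fun s : ℕ => μW * s) (fun s _ => s + 1) w EY (fun _ _ => 0) (n+1) ω ≤ t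
      → (n:ℝ) < Real.exp (c*t + B) := by
    intro n hTn
    have h1 := hTge (n+1)
    have h1' : (1/c) * (Real.log ((n:ℝ)+1) - Real.log w - 1) - C/μW
        ≤ jumpT (fun s : ℕ => μW * s) (fun s _ => s + 1) w EY (fun _ _ => 0) (n+1) ω := by
      convert h1 using 4
      push_cast
      ring
    have h2 : (1/c) * (Real.log ((n:ℝ)+1) - Real.log w - 1) - C/μW ≤ t := le_trans h1' hTn
    have h3 : Real.log ((n:ℝ)+1) ≤ c*t + B := by
      have hc' : (0:ℝ) < 1/c := by positivity
      have hmul : (1/c) * Real.log ((n:ℝ)+1) ≤ t + C/μW + (1/c) * (Real.log w + 1) := by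
        nlinarith [h2]
      have h4 : Real.log ((n:ℝ)+1) = c * ((1/c) * Real.log ((n:ℝ)+1)) := by field_simp
      rw [h4, hBdef]
      calc c * ((1/c) * Real.log ((n:ℝ)+1))
          ≤ c * (t + C/μW + (1/c) * (Real.log w + 1)) :=
            mul_le_mul_of_nonneg_left hmul hcpos.le
        _ = c*t + (Real.log w + 1 + c*C/μW) := by field_simp; ring
    have h4 : (n:ℝ)+1 ≤ Real.exp (c*t + B) := by
      have := Real.exp_le_exp.mpr h3
      rwa [Real.exp_log (by positivity : (0:ℝ) < (n:ℝ)+1)] at this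
    linarith
  have hcard : Nat.card {n : ℕ | jumpT (fun s : ℕ => μW * s) (fun s _ => s + 1) w EY
      (fun _ _ => 0) (n+1) ω ≤ t} ≤ ⌊Real.exp (c*t + B)⌋₊ + 1 := by
    apply card_setOf_le
    intro n hn
    have := hkey n hn
    have h5 : (n:ℝ) < (⌊Real.exp (c*t + B)⌋₊ : ℝ) + 1 := by
      have := Nat.lt_floor_add_one (Real.exp (c*t + B))
      linarith [Nat.floor_le (Real.exp_nonneg (c*t + B)) ]
    have : n < ⌊Real.exp (c*t + B)⌋₊ + 1 := by exact_mod_cast h5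
    exact this
  rw [yule_eq]
  push_cast
  have hexp1 : 1 ≤ Real.exp (c * t) := Real.one_le_exp (mul_nonneg hcpos.le ht)
  have hfloor : (⌊Real.exp (c*t + B)⌋₊ : ℝ) ≤ Real.exp (c*t + B) :=
    Nat.floor_le (Real.exp_nonneg _)
  have hcard' : ((Nat.card {n : ℕ | jumpT (fun s : ℕ => μW * s) (fun s _ => s + 1) w EY
      (fun _ _ => 0) (n+1) ω ≤ t} : ℕ) : ℝ) ≤ Real.exp (c*t + B) + 1 := by
    have := hcard
    have h6 : ((⌊Real.exp (c*t + B)⌋₊ + 1 : ℕ) : ℝ) ≤ Real.exp (c*t + B) + 1 := by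
      push_cast
      linarith
    calc ((Nat.card _ : ℕ) : ℝ) ≤ ((⌊Real.exp (c*t + B)⌋₊ + 1 : ℕ) : ℝ) := by exact_mod_cast this
      _ ≤ _ := h6
  have hsplit : Real.exp (c*t + B) = Real.exp B * Real.exp (c*t) := by
    rw [← Real.exp_add]; ring_nf
  calc (w:ℝ) + ((Nat.card {n : ℕ | jumpT (fun s : ℕ => μW * s) (fun s _ => s + 1) w EY
      (fun _ _ => 0) (n+1) ω ≤ t} : ℕ) : ℝ)
      ≤ (w:ℝ) + (Real.exp (c*t + B) + 1) := by linarith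
    _ = (w:ℝ) + Real.exp B * Real.exp (c*t) + 1 := by rw [hsplit]; ring
    _ ≤ ((w:ℝ) + Real.exp B + 1) * Real.exp (c*t) := by
        nlinarith [Real.exp_pos B, Nat.cast_nonneg (α := ℝ) w]
    _ = ((w:ℝ) + Real.exp (Real.log w + 1 + c*C/μW) + 1) * Real.exp (c * t) := by rw [hBdef]

end Assembly2

section MainPointwise
open Finset Topology
open scoped Classical

set_option maxHeartbeats 2000000 in
/-- Pointwise form of Proposition 6: along a typical driving path, the killed
process must hit zero. -/
lemma main_pointwise
    {μW μZ ν : ℝ} (hμW : 0 < μW) (hν : 0 < ν) (hsub : μW < μZ - ν)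
    {w z : ℕ} (hw : 1 ≤ w) {W : ℝ → Ω → ℕ}
    {EY EZ UZ : ℕ → Ω → ℝ} {F : ℕ → ℕ → Ω → ℝ} {X : ℕ → ℝ → Ω → ℕ} {ω : Ω}
    (hX : ∀ i, ∀ t : ℝ, 0 ≤ t → X i (bdBirthTime μZ ν z EZ UZ i ω + t) ω
      = yule μW 1 (F i) t ω)
    (hW : ∀ t : ℝ, 0 ≤ t → (W t ω : ℤ) =
      (yule μW w EY t ω : ℤ) - ∑' i : ℕ,
        if bdBirthTime μZ ν z EZ UZ i ω ≤ t ∧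
            (i : ℕ∞) ≤ killIdxR W (bdBirthTime μZ ν z EZ UZ) ω
          then (X i t ω : ℤ) else 0)
    (hEY0 : ∀ n, 0 ≤ EY n ω) (hEZ0 : ∀ n, 0 ≤ EZ n ω)
    (hU : ∀ n, UZ n ω ∈ Set.Ioc (0:ℝ) 1)
    (hEYs : Tendsto (fun n => (∑ k ∈ range n, EY k ω)/n) atTop (𝓝 1))
    (hEZs : Tendsto (fun n => (∑ k ∈ range n, EZ k ω)/n) atTop (𝓝 1))
    (hUs : Tendsto (fun n => (∑ k ∈ range n,
        (if UZ k ω ≤ μZ/(μZ+ν) then (1:ℝ) else 0))/n) atTop (𝓝 (μZ/(μZ+ν)))) :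
    ∃ t : ℝ, 0 ≤ t ∧ W t ω = 0 := by
  by_contra hcon
  push_neg at hcon
  have hμZ : 0 < μZ := by linarith
  have hlam : 0 < μZ - ν := by linarith
  have hμν : (0:ℝ) < μZ + ν := by linarith
  have hppos : 0 < μZ/(μZ+ν) := by positivity
  -- basic path facts
  have hTmono : Monotone (fun n => bdTimes μZ ν z EZ UZ n ω) :=
    jumpT_mono (R := bdR μZ ν) (next := bdNext μZ ν) (x := z) (U := UZ)
      hEZ0 (fun m => bdR_pos hμZ hν.le _)
  have hTnn : ∀ n, 0 ≤ bdTimes μZ ν z EZ UZ n ω :=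
    jumpT_nonneg (R := bdR μZ ν) (next := bdNext μZ ν) (x := z) (U := UZ)
      hEZ0 (fun m => bdR_pos hμZ hν.le _)
  have hσnn : ∀ i, 0 ≤ bdBirthTime μZ ν z EZ UZ i ω := fun i => hTnn _
  -- the kill index is ⊤
  have hκ : ∀ i : ℕ, (i:ℕ∞) ≤ killIdxR W (bdBirthTime μZ ν z EZ UZ) ω := by
    intro i
    have hempty : {e : ℕ∞ | ∃ n : ℕ, e = (n:ℕ∞)
        ∧ W (bdBirthTime μZ ν z EZ UZ n ω) ω = 0} = ∅ := by
      ext e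
      simp only [Set.mem_setOf_eq, Set.mem_empty_iff_false, iff_false, not_exists]
      rintro n ⟨rfl, h0⟩
      exact hcon _ (hσnn n) h0
    rw [killIdxR, hempty]
    simp
  -- infinitely many up-steps
  have hPinf : {k : ℕ | UZ k ω ≤ μZ/(μZ+ν)}.Infinite := by
    by_contra hfin
    rw [Set.not_infinite] at hfin
    set N := hfin.toFinset.card with hNdef
    have hbound : ∀ n : ℕ, (∑ k ∈ range n, (if UZ k ω ≤ μZ/(μZ+ν) then (1:ℝ) else 0)) ≤ N := by
      intro n
      have h1 : (∑ k ∈ range n, (if UZ k ω ≤ μZ/(μZ+ν) then (1:ℝ) else 0))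
          = (((range n).filter (fun k => UZ k ω ≤ μZ/(μZ+ν))).card : ℝ) := by
        rw [Finset.sum_boole]
      rw [h1]
      have h2 : ((range n).filter (fun k => UZ k ω ≤ μZ/(μZ+ν))) ⊆ hfin.toFinset := by
        intro k hk
        rw [Set.Finite.mem_toFinset]
        exact (Finset.mem_filter.mp hk).2
      exact_mod_cast Finset.card_le_card h2
    -- but the averages tend to p > 0
    have hev := hUs.eventually_const_lt (by linarith : μZ/(μZ+ν)/2 < μZ/(μZ+ν))
    obtain ⟨n₀, hn₀⟩ := Filter.eventually_atTop.mp hev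
    obtain ⟨n, hn1, hn2⟩ : ∃ n : ℕ, n₀ ≤ n ∧ (2*(N+1))/(μZ/(μZ+ν)) ≤ (n:ℝ) := by
      obtain ⟨n, hn⟩ := exists_nat_ge (max (n₀:ℝ) ((2*(N+1))/(μZ/(μZ+ν))))
      refine ⟨n, ?_, le_trans (le_max_right _ _) hn⟩
      have := le_trans (le_max_left (n₀:ℝ) _) hn
      exact_mod_cast this
    have h3 := hn₀ n hn1
    have hnpos : (0:ℝ) < n := by
      have h4 : (0:ℝ) < (2*((N:ℝ)+1))/(μZ/(μZ+ν)) := by positivity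
      linarith
    rw [lt_div_iff₀ hnpos] at h3
    have h5 := hbound n
    have h6 : (N:ℝ)+1 ≤ (μZ/(μZ+ν)/2) * n := by
      have hhalf : (0:ℝ) < μZ/(μZ+ν)/2 := by positivity
      have hmul := mul_le_mul_of_nonneg_left hn2 hhalf.le
      have hne : μZ/(μZ+ν) ≠ 0 := ne_of_gt hppos
      calc (N:ℝ)+1 = (μZ/(μZ+ν)/2) * ((2*((N:ℝ)+1))/(μZ/(μZ+ν))) := by
            field_simp
        _ ≤ (μZ/(μZ+ν)/2) * n := hmul
    linarith
  have hBinf : {k : ℕ | bdUp μZ ν z UZ k ω}.Infinite :=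
    hPinf.mono (fun k hk => bdUp_of_le hμZ hν z hU hk)
  -- constants
  set c : ℝ := (μW + (μZ - ν))/2 with hcdef
  have hcμW : μW < c := by rw [hcdef]; linarith
  have hclam : c < μZ - ν := by rw [hcdef]; linarith
  have hcpos : 0 < c := lt_trans hμW hcμW
  set cZ : ℝ := (1/c + 1/(μZ-ν))/2 with hcZdef
  have hinv : 1/(μZ-ν) < 1/c := by
    apply one_div_lt_one_div_of_lt hcpos hclam
  have hcZ1 : 1/(μZ-ν) < cZ := by rw [hcZdef]; linarith
  have hcZ2 : cZ < 1/c := by rw [hcZdef]; linarith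
  have hβ : c * cZ < 1 := by
    have h1 : c * cZ < c * (1/c) := mul_lt_mul_of_pos_left hcZ2 hcpos
    have h2 : c * (1/c) = 1 := by field_simp
    linarith
  have hcZpos : 0 < cZ := lt_trans (by positivity) hcZ1
  obtain ⟨D, hD1, hYle⟩ := yule_upper (EY := EY) hμW hw hEY0 hEYs hcμW
  obtain ⟨C₂, hC₂⟩ := bdTimes_upper (EZ := EZ) (UZ := UZ) hμZ hν hlam z hEZ0 hU hEZs hUs hcZ1
  have hTat : Tendsto (fun n => bdTimes μZ ν z EZ UZ n ω) atTop atTop :=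
    bdTimes_atTop (UZ := UZ) hμZ hν z hEZ0 hEZs
  -- key comparison: the number of births before the n-th jump is at most Y at that time
  have hkey : ∀ n : ℕ,
      ((Nat.count (fun k => bdUp μZ ν z UZ k ω) n : ℕ) : ℤ)
        ≤ (yule μW w EY (bdTimes μZ ν z EZ UZ n ω) ω : ℤ) := by
    intro n
    set t : ℝ := bdTimes μZ ν z EZ UZ n ω with htdef
    have ht : 0 ≤ t := hTnn n
    set G : ℕ := Nat.count (fun k => bdUp μZ ν z UZ k ω) n with hGdef
    -- eventually jump times exceed t
    obtain ⟨M, hM⟩ := Filter.eventually_atTop.mp (hTat.eventually_gt_atTop t)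
    -- birth times with large index exceed t
    have hσbig : ∀ i : ℕ, M ≤ i → ¬ (bdBirthTime μZ ν z EZ UZ i ω ≤ t) := by
      intro i hi
      have h1 : i ≤ Nat.nth (fun k => bdUp μZ ν z UZ k ω) i :=
        (Nat.nth_strictMono hBinf).le_apply
      have h2 : M ≤ Nat.nth (fun k => bdUp μZ ν z UZ k ω) i + 1 := by omega
      have h3 := hM _ h2
      rw [not_le]
      exact h3
    -- birth times with index < G are at most t, and contribute at least 1
    have hσsmall : ∀ i : ℕ, i < G → bdBirthTime μZ ν z EZ UZ i ω ≤ t := by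
      intro i hi
      have h1 : Nat.nth (fun k => bdUp μZ ν z UZ k ω) i < n :=
        Nat.nth_lt_of_lt_count (by rw [hGdef] at hi; exact hi)
      have h2 : Nat.nth (fun k => bdUp μZ ν z UZ k ω) i + 1 ≤ n := h1
      exact hTmono h2
    have hGM : G ≤ M := by
      by_contra hGM
      push_neg at hGM
      exact hσbig M le_rfl (hσsmall M hGM)
    -- rewrite the tsum as a finite sum
    have hWn := hW t ht
    rw [tsum_eq_sum (s := range M) (by
      intro i hi
      rw [Finset.mem_range, not_lt] at hi
      rw [if_neg]
      rintro ⟨h1, -⟩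
      exact hσbig i hi h1)] at hWn
    -- the killed population is nonnegative
    have hWnn : (0:ℤ) ≤ (W t ω : ℤ) := Int.natCast_nonneg _
    -- each small index contributes at least one
    have hone : ∀ i ∈ range G, (1:ℤ)
        ≤ (if bdBirthTime μZ ν z EZ UZ i ω ≤ t ∧
            (i : ℕ∞) ≤ killIdxR W (bdBirthTime μZ ν z EZ UZ) ω
          then (X i t ω : ℤ) else 0) := by
      intro i hi
      rw [Finset.mem_range] at hi
      rw [if_pos ⟨hσsmall i hi, hκ i⟩]
      have hs : (0:ℝ) ≤ t - bdBirthTime μZ ν z EZ UZ i ω := by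
        linarith [hσsmall i hi]
      have hXi := hX i (t - bdBirthTime μZ ν z EZ UZ i ω) hs
      have heq : bdBirthTime μZ ν z EZ UZ i ω + (t - bdBirthTime μZ ν z EZ UZ i ω) = t := by
        ring
      rw [heq] at hXi
      rw [hXi]
      exact_mod_cast one_le_yule μW (F i) _ ω
    have hnonneg : ∀ i ∈ range M, (0:ℤ)
        ≤ (if bdBirthTime μZ ν z EZ UZ i ω ≤ t ∧
            (i : ℕ∞) ≤ killIdxR W (bdBirthTime μZ ν z EZ UZ) ω
          then (X i t ω : ℤ) else 0) := by
      intro i _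
      split
      · exact Int.natCast_nonneg _
      · exact le_refl 0
    have hsum_ge : (G:ℤ) ≤ ∑ i ∈ range M,
        (if bdBirthTime μZ ν z EZ UZ i ω ≤ t ∧
            (i : ℕ∞) ≤ killIdxR W (bdBirthTime μZ ν z EZ UZ) ω
          then (X i t ω : ℤ) else 0) := by
      calc (G:ℤ) = ∑ _i ∈ range G, (1:ℤ) := by simp
        _ ≤ ∑ i ∈ range G,
            (if bdBirthTime μZ ν z EZ UZ i ω ≤ t ∧
                (i : ℕ∞) ≤ killIdxR W (bdBirthTime μZ ν z EZ UZ) ω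
              then (X i t ω : ℤ) else 0) := Finset.sum_le_sum hone
        _ ≤ _ := Finset.sum_le_sum_of_subset_of_nonneg
            (Finset.range_subset_range.mpr hGM) (fun i hi _ => hnonneg i hi)
    omega
  -- growth of the count
  have hev := hUs.eventually_const_lt (by linarith : μZ/(μZ+ν)/2 < μZ/(μZ+ν))
  have hcount : ∀ᶠ n : ℕ in atTop,
      (μZ/(μZ+ν)/2) * n ≤ ((Nat.count (fun k => bdUp μZ ν z UZ k ω) n : ℕ) : ℝ) := by
    filter_upwards [hev, Filter.eventually_ge_atTop 1] with n hn hn1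
    have hnpos : (0:ℝ) < n := by exact_mod_cast hn1
    rw [lt_div_iff₀ hnpos] at hn
    have h1 : (∑ k ∈ range n, (if UZ k ω ≤ μZ/(μZ+ν) then (1:ℝ) else 0))
        = ((Nat.count (fun k => UZ k ω ≤ μZ/(μZ+ν)) n : ℕ) : ℝ) := by
      rw [Finset.sum_boole, Nat.count_eq_card_filter_range]
    have h2 : Nat.count (fun k => UZ k ω ≤ μZ/(μZ+ν)) n
        ≤ Nat.count (fun k => bdUp μZ ν z UZ k ω) n := by
      rw [Nat.count_eq_card_filter_range, Nat.count_eq_card_filter_range]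
      apply Finset.card_le_card
      apply Finset.monotone_filter_right
      intro k _ hk
      exact bdUp_of_le hμZ hν z hU hk
    have h3 : ((Nat.count (fun k => UZ k ω ≤ μZ/(μZ+ν)) n : ℕ) : ℝ)
        ≤ ((Nat.count (fun k => bdUp μZ ν z UZ k ω) n : ℕ) : ℝ) := by exact_mod_cast h2
    rw [h1] at hn
    linarith
  -- the exponential bound
  have hYbound : ∀ᶠ n : ℕ in atTop,
      ((Nat.count (fun k => bdUp μZ ν z UZ k ω) n : ℕ) : ℝ)
        ≤ (D * Real.exp (c * C₂)) * (n:ℝ) ^ (c * cZ) := by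
    filter_upwards [Filter.eventually_ge_atTop 1] with n hn1
    have hnpos : (0:ℝ) < n := by exact_mod_cast hn1
    have h1 := hkey n
    have h2 : ((Nat.count (fun k => bdUp μZ ν z UZ k ω) n : ℕ) : ℝ)
        ≤ (yule μW w EY (bdTimes μZ ν z EZ UZ n ω) ω : ℝ) := by exact_mod_cast h1
    have h3 := hYle (bdTimes μZ ν z EZ UZ n ω) (hTnn n)
    have h4 := hC₂ n hn1
    have h5 : Real.exp (c * bdTimes μZ ν z EZ UZ n ω)
        ≤ Real.exp (c * (C₂ + cZ * Real.log n)) := by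
      apply Real.exp_le_exp.mpr
      apply mul_le_mul_of_nonneg_left h4 hcpos.le
    have h6 : Real.exp (c * (C₂ + cZ * Real.log n))
        = Real.exp (c * C₂) * (n:ℝ) ^ (c * cZ) := by
      rw [Real.rpow_def_of_pos hnpos]
      rw [← Real.exp_add]
      congr 1
      ring
    have h7 : D * Real.exp (c * bdTimes μZ ν z EZ UZ n ω)
        ≤ D * (Real.exp (c * C₂) * (n:ℝ) ^ (c * cZ)) := by
      apply mul_le_mul_of_nonneg_left _ (by linarith)
      rw [← h6]
      exact h5
    calc ((Nat.count (fun k => bdUp μZ ν z UZ k ω) n : ℕ) : ℝ)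
        ≤ (yule μW w EY (bdTimes μZ ν z EZ UZ n ω) ω : ℝ) := h2
      _ ≤ D * Real.exp (c * bdTimes μZ ν z EZ UZ n ω) := h3
      _ ≤ D * (Real.exp (c * C₂) * (n:ℝ) ^ (c * cZ)) := h7
      _ = (D * Real.exp (c * C₂)) * (n:ℝ) ^ (c * cZ) := by ring
  -- contradiction via decay of n^{β-1}
  set D' : ℝ := D * Real.exp (c * C₂) with hD'def
  have hD'pos : 0 < D' := by
    rw [hD'def]
    have := Real.exp_pos (c * C₂)
    nlinarith
  have hdecay : Tendsto (fun n : ℕ => D' * (n:ℝ) ^ (c * cZ - 1)) atTop (𝓝 0) := by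
    have h1 : Tendsto (fun x : ℝ => x ^ (-(1 - c * cZ))) atTop (𝓝 0) :=
      tendsto_rpow_neg_atTop (by linarith)
    have h2 : Tendsto (fun n : ℕ => ((n:ℝ)) ^ (-(1 - c * cZ))) atTop (𝓝 0) :=
      h1.comp tendsto_natCast_atTop_atTop
    have h3 : (fun n : ℕ => D' * (n:ℝ) ^ (c * cZ - 1))
        = fun n : ℕ => D' * ((n:ℝ)) ^ (-(1 - c * cZ)) := by
      funext n
      congr 1
      ring_nf
    rw [h3]
    have := h2.const_mul D'
    simpa using this
  have hsmall : ∀ᶠ n : ℕ in atTop, D' * (n:ℝ) ^ (c * cZ - 1) < μZ/(μZ+ν)/2 :=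
    hdecay.eventually_lt_const (by positivity)
  -- combine
  obtain ⟨n, ⟨⟨hn1, hn2⟩, hn3⟩, hn4⟩ :=
    (((hcount.and hYbound).and hsmall).and (Filter.eventually_ge_atTop 1)).exists
  have hnpos : (0:ℝ) < n := by exact_mod_cast hn4
  have hpow : (n:ℝ) ^ (c * cZ) = (n:ℝ) ^ (c * cZ - 1) * (n:ℝ) := by
    have h := Real.rpow_add_one (ne_of_gt hnpos) (c * cZ - 1)
    rw [sub_add_cancel] at h
    exact h
  have h5 : (D * Real.exp (c * C₂)) * (n:ℝ) ^ (c * cZ)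
      = (D' * (n:ℝ) ^ (c * cZ - 1)) * (n:ℝ) := by
    rw [hD'def, hpow]; ring
  have h6 : (D' * (n:ℝ) ^ (c * cZ - 1)) * (n:ℝ) < (μZ/(μZ+ν)/2) * n :=
    mul_lt_mul_of_pos_right hn3 hnpos
  rw [h5] at hn2
  linarith

end MainPointwise

section Probabilistic
open Finset Topology
open scoped ENNReal NNReal

variable {P : Measure Ω}

lemma expMeasure_one_eq :
    expMeasure 1 = (volume : Measure ℝ).withDensity
      (fun x => ENNReal.ofReal (if 0 ≤ x then Real.exp (-x) else 0)) := by
  rw [expMeasure]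
  congr 1
  funext x
  rw [exponentialPDF_eq]
  congr 1
  split <;> norm_num

lemma measurable_expf : Measurable (fun x : ℝ => if 0 ≤ x then Real.exp (-x) else 0) := by
  refine Measurable.ite measurableSet_Ici ?_ measurable_const
  exact (Real.continuous_exp.comp continuous_neg).measurable

lemma expf_nonneg (x : ℝ) : 0 ≤ (if 0 ≤ x then Real.exp (-x) else 0) := by
  split
  · exact (Real.exp_pos _).le
  · exact le_refl 0

lemma expf_mul_id : (fun x : ℝ => (if 0 ≤ x then Real.exp (-x) else 0) * x)
    = Set.indicator (Set.Ioi 0) (fun y => Real.exp (-y) * y) := by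
  funext x
  rcases lt_trichotomy x 0 with h | h | h
  · rw [if_neg (not_le.mpr h), Set.indicator_of_notMem (by simpa using h.le)]
    ring
  · subst h
    simp
  · rw [if_pos h.le, Set.indicator_of_mem (Set.mem_Ioi.mpr h)]

lemma integrableOn_exp_mul_id :
    IntegrableOn (fun y : ℝ => Real.exp (-y) * y) (Set.Ioi 0) := by
  have h := Real.GammaIntegral_convergent (by norm_num : (0:ℝ) < 2)
  have heq : ∀ y ∈ Set.Ioi (0:ℝ), Real.exp (-y) * y ^ ((2:ℝ) - 1) = Real.exp (-y) * y := by
    intro y hy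
    norm_num
  exact h.congr_fun heq measurableSet_Ioi

lemma integral_exp_mul_id : ∫ y in Set.Ioi (0:ℝ), Real.exp (-y) * y = 1 := by
  have h := Real.Gamma_eq_integral (by norm_num : (0:ℝ) < 2)
  have heq : ∫ y in Set.Ioi (0:ℝ), Real.exp (-y) * y ^ ((2:ℝ) - 1)
      = ∫ y in Set.Ioi (0:ℝ), Real.exp (-y) * y := by
    apply setIntegral_congr_fun measurableSet_Ioi
    intro y hy
    norm_num
  rw [heq] at h
  rw [← h, Real.Gamma_two]

lemma expMeasure_withDensity_toNNReal :
    expMeasure 1 = (volume : Measure ℝ).withDensity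
      (fun x => (((if 0 ≤ x then Real.exp (-x) else 0).toNNReal : ℝ≥0) : ℝ≥0∞)) := by
  rw [expMeasure_one_eq]
  rfl

lemma integrable_id_expMeasure : Integrable (id : ℝ → ℝ) (expMeasure 1) := by
  rw [expMeasure_withDensity_toNNReal]
  rw [integrable_withDensity_iff_integrable_smul (measurable_expf.real_toNNReal)]
  have : (fun x : ℝ => (Real.toNNReal (if 0 ≤ x then Real.exp (-x) else 0)) • (id x))
      = Set.indicator (Set.Ioi 0) (fun y => Real.exp (-y) * y) := by
    rw [← expf_mul_id]
    funext x
    rw [NNReal.smul_def, Real.coe_toNNReal _ (expf_nonneg x)]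
    rfl
  rw [this]
  exact integrableOn_exp_mul_id.integrable_indicator measurableSet_Ioi

lemma integral_id_expMeasure : ∫ x, x ∂(expMeasure 1) = 1 := by
  rw [expMeasure_withDensity_toNNReal]
  have h := integral_withDensity_eq_integral_smul (μ := (volume : Measure ℝ))
    (f := fun x => Real.toNNReal (if 0 ≤ x then Real.exp (-x) else 0))
    (measurable_expf.real_toNNReal) (fun x => x)
  rw [h]
  have heq : (fun x : ℝ => (Real.toNNReal (if 0 ≤ x then Real.exp (-x) else 0)) • x)
      = Set.indicator (Set.Ioi 0) (fun y => Real.exp (-y) * y) := by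
    rw [← expf_mul_id]
    funext x
    rw [NNReal.smul_def, Real.coe_toNNReal _ (expf_nonneg x)]
    rw [smul_eq_mul]
  rw [heq, integral_indicator measurableSet_Ioi, integral_exp_mul_id]

lemma integrable_of_map_exp {E : Ω → ℝ} (hm : Measurable E)
    (h : Measure.map E P = expMeasure 1) : Integrable E P := by
  have h1 := (integrable_map_measure (f := E) (g := (id : ℝ → ℝ))
    (by rw [h]; exact aestronglyMeasurable_id) hm.aemeasurable).mp
  rw [h] at h1
  exact h1 integrable_id_expMeasure

lemma integral_of_map_exp {E : Ω → ℝ} (hm : Measurable E)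
    (h : Measure.map E P = expMeasure 1) : ∫ ω, E ω ∂P = 1 := by
  have h1 : ∫ x, (id : ℝ → ℝ) x ∂(Measure.map E P) = ∫ ω, (id : ℝ → ℝ) (E ω) ∂P :=
    integral_map hm.aemeasurable (by rw [h]; exact aestronglyMeasurable_id)
  rw [h] at h1
  simp only [id] at h1
  rw [← h1]
  exact integral_id_expMeasure

lemma ae_nonneg_of_map_exp {E : Ω → ℝ} (hm : Measurable E)
    (h : Measure.map E P = expMeasure 1) : ∀ᵐ ω ∂P, 0 ≤ E ω := by
  have hset : P (E ⁻¹' (Set.Iio 0)) = 0 := by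
    have h1 := Measure.map_apply (μ := P) hm (measurableSet_Iio (a := (0:ℝ)))
    rw [h] at h1
    rw [← h1, expMeasure, withDensity_apply _ measurableSet_Iio]
    exact lintegral_exponentialPDF_of_nonpos le_rfl
  rw [ae_iff]
  convert hset using 2
  ext ω
  simp [not_le]

lemma ae_Ioc_of_map_unif {U : Ω → ℝ} (hm : Measurable U)
    (h : Measure.map U P = unifMeasure) : ∀ᵐ ω ∂P, U ω ∈ Set.Ioc (0:ℝ) 1 := by
  have hset : P (U ⁻¹' (Set.Ioc (0:ℝ) 1)ᶜ) = 0 := by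
    have h1 := Measure.map_apply (μ := P) hm (measurableSet_Ioc (a := (0:ℝ)) (b := 1)).compl
    rw [h] at h1
    rw [← h1, unifMeasure, Measure.restrict_apply measurableSet_Ioc.compl,
      Set.compl_inter_self]
    simp
  rw [ae_iff]
  convert hset using 2
  rfl

lemma slln_exp [IsProbabilityMeasure P] (E : ℕ → Ω → ℝ) (hm : ∀ n, Measurable (E n))
    (hindep : Pairwise fun i j => IndepFun (E i) (E j) P)
    (hlaw : ∀ n, Measure.map (E n) P = expMeasure 1) :
    ∀ᵐ ω ∂P, Tendsto (fun n => (∑ k ∈ range n, E k ω)/n) atTop (𝓝 1) := by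
  have hint : Integrable (E 0) P := integrable_of_map_exp (hm 0) (hlaw 0)
  have hident : ∀ i, IdentDistrib (E i) (E 0) P P :=
    fun i => ⟨(hm i).aemeasurable, (hm 0).aemeasurable, by rw [hlaw i, hlaw 0]⟩
  have h := strong_law_ae_real E hint (fun i j hij => hindep hij) hident
  have hmean : ∫ ω, E 0 ω ∂P = 1 := integral_of_map_exp (hm 0) (hlaw 0)
  filter_upwards [h] with ω hω
  have : (∫ ω, E 0 ω ∂P) = 1 := hmean
  rw [← this]
  exact hω

lemma slln_unif_indicator [IsProbabilityMeasure P] (U : ℕ → Ω → ℝ)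
    (hm : ∀ n, Measurable (U n))
    (hindep : Pairwise fun i j => IndepFun (U i) (U j) P)
    (hlaw : ∀ n, Measure.map (U n) P = unifMeasure) {p : ℝ} (hp0 : 0 < p) (hp1 : p ≤ 1) :
    ∀ᵐ ω ∂P, Tendsto (fun n => (∑ k ∈ range n,
      (if U k ω ≤ p then (1:ℝ) else 0))/n) atTop (𝓝 p) := by
  classical
  set φ : ℝ → ℝ := fun x => if x ≤ p then 1 else 0 with hφdef
  have hφm : Measurable φ := by
    refine Measurable.ite measurableSet_Iic measurable_const measurable_const
  set X : ℕ → Ω → ℝ := fun n ω => φ (U n ω) with hXdef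
  have hXm : ∀ n, Measurable (X n) := fun n => hφm.comp (hm n)
  have hint : Integrable (X 0) P := by
    apply MeasureTheory.Integrable.mono' (integrable_const (1:ℝ))
      (hXm 0).aestronglyMeasurable
    filter_upwards with ω
    rw [hXdef]
    simp only [hφdef]
    split <;> simp
  have hindepX : Pairwise (Function.onFun (IndepFun · · P) X) := by
    intro i j hij
    exact (hindep hij).comp hφm hφm
  have hident : ∀ i, IdentDistrib (X i) (X 0) P P := by
    intro i
    have hbase : IdentDistrib (U i) (U 0) P P :=
      ⟨(hm i).aemeasurable, (hm 0).aemeasurable, by rw [hlaw i, hlaw 0]⟩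
    exact hbase.comp hφm
  have h := strong_law_ae_real X hint hindepX hident
  have hmean : ∫ ω, X 0 ω ∂P = p := by
    have h1 : ∫ ω, X 0 ω ∂P = ∫ x, φ x ∂(Measure.map (U 0) P) :=
      (integral_map (hm 0).aemeasurable hφm.aestronglyMeasurable).symm
    rw [h1, hlaw 0, unifMeasure]
    have hφeq : φ = Set.indicator (Set.Iic p) (fun _ => (1:ℝ)) := by
      funext x
      rw [hφdef]
      simp [Set.indicator_apply, Set.mem_Iic]
    rw [hφeq]
    rw [integral_indicator measurableSet_Iic]
    simp only [integral_const]
    rw [Measure.restrict_restrict measurableSet_Iic]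
    have hinter : Set.Iic p ∩ Set.Ioc (0:ℝ) 1 = Set.Ioc 0 p := by
      ext x
      simp only [Set.mem_inter_iff, Set.mem_Iic, Set.mem_Ioc]
      constructor
      · rintro ⟨h1, h2, h3⟩; exact ⟨h2, h1⟩
      · rintro ⟨h1, h2⟩; exact ⟨h2, h1, le_trans h2 hp1⟩
    rw [hinter]
    simp [Real.volume_Ioc, ENNReal.toReal_ofReal hp0.le, hp0.le]
  filter_upwards [h] with ω hω
  rw [hmean] at hω
  exact hω

end Probabilistic

/-- Proposition 6 (first part): in the interacting system with `μ_Z − ν > μ_W > 0`, the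
extinction time `H₀ = inf{t ≥ 0 : W(t) = 0}` of the killed Yule process is almost surely
finite, i.e. almost surely `W` hits `0`. -/
theorem killed_yule_extinction {Ω : Type*} [MeasurableSpace Ω] (P : Measure Ω)
    [IsProbabilityMeasure P] (μW μZ ν : ℝ) (hμW : 0 < μW) (hν : 0 < ν)
    (hsub : μW < μZ - ν) (w z : ℕ) (hw : 1 ≤ w)
    (W Z Y : ℝ → Ω → ℕ) (hrep : KilledYuleRep P μW μZ ν w z W Z Y) :
    ∀ᵐ ω ∂P, ∃ t : ℝ, 0 ≤ t ∧ W t ω = 0 := by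
  obtain ⟨EY, EZ, UZ, F, X, hmEY, hmEZ, hmUZ, hmF, hindep, hlawEY, hlawEZ, hlawUZ, hlawF,
    hYdef, hZdef, hXdef, hWdef⟩ := hrep
  have hμZ : 0 < μZ := by linarith
  have hμν : (0:ℝ) < μZ + ν := by linarith
  have hp0 : 0 < μZ/(μZ+ν) := by positivity
  have hp1 : μZ/(μZ+ν) ≤ 1 := by
    rw [div_le_one hμν]; linarith
  have hiEY : Pairwise fun i j => IndepFun (EY i) (EY j) P := by
    intro i j hij
    exact hindep.indepFun (i := Sum.inl (Sum.inl i)) (j := Sum.inl (Sum.inl j))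
      (fun h => hij (by simpa using h))
  have hiEZ : Pairwise fun i j => IndepFun (EZ i) (EZ j) P := by
    intro i j hij
    exact hindep.indepFun (i := Sum.inl (Sum.inr i)) (j := Sum.inl (Sum.inr j))
      (fun h => hij (by simpa using h))
  have hiUZ : Pairwise fun i j => IndepFun (UZ i) (UZ j) P := by
    intro i j hij
    exact hindep.indepFun (i := Sum.inr (Sum.inl i)) (j := Sum.inr (Sum.inl j))
      (fun h => hij (by simpa using h))
  have hsEY := slln_exp (P := P) EY hmEY hiEY hlawEY
  have hsEZ := slln_exp (P := P) EZ hmEZ hiEZ hlawEZ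
  have hsUZ := slln_unif_indicator (P := P) UZ hmUZ hiUZ hlawUZ hp0 hp1
  have haeEY : ∀ᵐ ω ∂P, ∀ n, 0 ≤ EY n ω :=
    ae_all_iff.mpr (fun n => ae_nonneg_of_map_exp (hmEY n) (hlawEY n))
  have haeEZ : ∀ᵐ ω ∂P, ∀ n, 0 ≤ EZ n ω :=
    ae_all_iff.mpr (fun n => ae_nonneg_of_map_exp (hmEZ n) (hlawEZ n))
  have haeUZ : ∀ᵐ ω ∂P, ∀ n, UZ n ω ∈ Set.Ioc (0:ℝ) 1 :=
    ae_all_iff.mpr (fun n => ae_Ioc_of_map_unif (hmUZ n) (hlawUZ n))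
  filter_upwards [hsEY, hsEZ, hsUZ, haeEY, haeEZ, haeUZ] with ω h1 h2 h3 h4 h5 h6
  subst hYdef
  exact main_pointwise hμW hν hsub hw (fun i t ht => hXdef i t ht ω)
    (fun t ht => hWdef t ht ω) h4 h5 h6 h1 h2 h3


end FileSharing
end
end
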